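/- arXiv:nlin/0101027 — 8 statements merged into one kernel-verified Lean document; each statement's English description precedes it below -/
import Mathlib

section
/- Let η > 0, α ∈ ℝ, and let λ ∈ ℂ be nonzero. Let A(x,t) := 12η²·sech²(η(x − 4η²t − α)) be the one-soliton solution of KdV, and define the complex-valued function g(x,t) := (1 + (2iη/λ)·tanh(η(x − 4η²t − α)))·exp(i(λx + λ³t)). Then B(x,t) := ∂_x g(x,t) satisfies the linear equation with coupling constant κ = 1/2, namely ∂_t B + ∂_x[(1/2)·A·B + ∂_x²B] = 0, at every point (x,t) ∈ ℝ². -/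
open Complex

private lemma tanh_hasDerivAt (y : ℝ) :
    HasDerivAt Real.tanh (1 - Real.tanh y ^ 2) y := by
  have h := (Real.hasDerivAt_sinh y).div (Real.hasDerivAt_cosh y) (Real.cosh_pos y).ne'
  have hfun : (Real.sinh / Real.cosh) = Real.tanh :=
    funext fun z => (Real.tanh_eq_sinh_div_cosh z).symm
  rw [hfun] at h
  refine h.congr_deriv ?_
  rw [Real.tanh_eq_sinh_div_cosh]
  have hc := (Real.cosh_pos y).ne'
  field_simp

private lemma sech_sq_eq (z : ℝ) :
    (1 / Real.cosh z) ^ 2 = 1 - Real.tanh z ^ 2 := by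
  rw [Real.tanh_eq_sinh_div_cosh]
  have hc := (Real.cosh_pos z).ne'
  field_simp
  linear_combination - Real.cosh_sq_sub_sinh_sq z

private lemma keyX (η α t : ℝ) (lam a0 a1 a2 a3 a4 : ℂ) (x : ℝ) :
    HasDerivAt (fun y : ℝ => (a0 + a1 * ((Real.tanh (η * (y - 4 * η ^ 2 * t - α)) : ℝ) : ℂ) + a2 * ((Real.tanh (η * (y - 4 * η ^ 2 * t - α)) : ℝ) : ℂ) ^ 2 + a3 * ((Real.tanh (η * (y - 4 * η ^ 2 * t - α)) : ℝ) : ℂ) ^ 3 + a4 * ((Real.tanh (η * (y - 4 * η ^ 2 * t - α)) : ℝ) : ℂ) ^ 4) * Complex.exp (Complex.I * (lam * (y : ℂ) + lam ^ 3 * (t : ℂ))))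
      (((a1 + 2 * a2 * ((Real.tanh (η * (x - 4 * η ^ 2 * t - α)) : ℝ) : ℂ) + 3 * a3 * ((Real.tanh (η * (x - 4 * η ^ 2 * t - α)) : ℝ) : ℂ) ^ 2 + 4 * a4 * ((Real.tanh (η * (x - 4 * η ^ 2 * t - α)) : ℝ) : ℂ) ^ 3) * ((η : ℂ) * (1 - ((Real.tanh (η * (x - 4 * η ^ 2 * t - α)) : ℝ) : ℂ) ^ 2)) + (a0 + a1 * ((Real.tanh (η * (x - 4 * η ^ 2 * t - α)) : ℝ) : ℂ) + a2 * ((Real.tanh (η * (x - 4 * η ^ 2 * t - α)) : ℝ) : ℂ) ^ 2 + a3 * ((Real.tanh (η * (x - 4 * η ^ 2 * t - α)) : ℝ) : ℂ) ^ 3 + a4 * ((Real.tanh (η * (x - 4 * η ^ 2 * t - α)) : ℝ) : ℂ) ^ 4) * (Complex.I * lam)) * Complex.exp (Complex.I * (lam * (x : ℂ) + lam ^ 3 * (t : ℂ)))) x := by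
  have hw : HasDerivAt (fun y : ℝ => η * (y - 4 * η ^ 2 * t - α)) (η * 1) x :=
    (((hasDerivAt_id x).sub_const (4 * η ^ 2 * t)).sub_const α).const_mul η
  have hT : HasDerivAt (fun y : ℝ => Real.tanh (η * (y - 4 * η ^ 2 * t - α)))
      ((1 - Real.tanh (η * (x - 4 * η ^ 2 * t - α)) ^ 2) * (η * 1)) x :=
    (tanh_hasDerivAt _).comp x hw
  have hTc : HasDerivAt (fun y : ℝ => ((Real.tanh (η * (y - 4 * η ^ 2 * t - α)) : ℝ) : ℂ))
      (((1 - Real.tanh (η * (x - 4 * η ^ 2 * t - α)) ^ 2) * (η * 1) : ℝ) : ℂ) x :=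
    hT.ofReal_comp
  have hE : HasDerivAt (fun y : ℝ => Complex.exp (Complex.I * (lam * (y : ℂ) + lam ^ 3 * (t : ℂ))))
      (Complex.exp (Complex.I * (lam * (x : ℂ) + lam ^ 3 * (t : ℂ))) * (Complex.I * lam)) x := by
    have hlin : HasDerivAt (fun z : ℂ => Complex.I * (lam * z + lam ^ 3 * (t : ℂ)))
        (Complex.I * lam) ((x : ℝ) : ℂ) := by
      simpa using (((hasDerivAt_id ((x : ℝ) : ℂ)).const_mul lam).add_const
        (lam ^ 3 * (t : ℂ))).const_mul Complex.I
    exact (hlin.comp_ofReal).cexp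
  have hT2 : HasDerivAt (fun y : ℝ => ((Real.tanh (η * (y - 4 * η ^ 2 * t - α)) : ℝ) : ℂ) ^ 2)
      (2 * ((Real.tanh (η * (x - 4 * η ^ 2 * t - α)) : ℝ) : ℂ) *
        (((1 - Real.tanh (η * (x - 4 * η ^ 2 * t - α)) ^ 2) * (η * 1) : ℝ) : ℂ)) x := by
    simpa [Function.comp_def] using (hasDerivAt_pow 2 _).comp x hTc
  have hT3 : HasDerivAt (fun y : ℝ => ((Real.tanh (η * (y - 4 * η ^ 2 * t - α)) : ℝ) : ℂ) ^ 3)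
      (3 * ((Real.tanh (η * (x - 4 * η ^ 2 * t - α)) : ℝ) : ℂ) ^ 2 *
        (((1 - Real.tanh (η * (x - 4 * η ^ 2 * t - α)) ^ 2) * (η * 1) : ℝ) : ℂ)) x := by
    simpa [Function.comp_def] using (hasDerivAt_pow 3 _).comp x hTc
  have hT4 : HasDerivAt (fun y : ℝ => ((Real.tanh (η * (y - 4 * η ^ 2 * t - α)) : ℝ) : ℂ) ^ 4)
      (4 * ((Real.tanh (η * (x - 4 * η ^ 2 * t - α)) : ℝ) : ℂ) ^ 3 *
        (((1 - Real.tanh (η * (x - 4 * η ^ 2 * t - α)) ^ 2) * (η * 1) : ℝ) : ℂ)) x := by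
    simpa [Function.comp_def] using (hasDerivAt_pow 4 _).comp x hTc
  have hP := ((((hTc.const_mul a1).const_add a0).add (hT2.const_mul a2)).add
      (hT3.const_mul a3)).add (hT4.const_mul a4)
  refine (hP.mul hE).congr_deriv ?_
  simp only [Pi.add_apply]
  push_cast
  ring

private lemma keyT (η α x : ℝ) (lam a0 a1 a2 a3 a4 : ℂ) (t : ℝ) :
    HasDerivAt (fun τ : ℝ => (a0 + a1 * ((Real.tanh (η * (x - 4 * η ^ 2 * τ - α)) : ℝ) : ℂ) + a2 * ((Real.tanh (η * (x - 4 * η ^ 2 * τ - α)) : ℝ) : ℂ) ^ 2 + a3 * ((Real.tanh (η * (x - 4 * η ^ 2 * τ - α)) : ℝ) : ℂ) ^ 3 + a4 * ((Real.tanh (η * (x - 4 * η ^ 2 * τ - α)) : ℝ) : ℂ) ^ 4) * Complex.exp (Complex.I * (lam * (x : ℂ) + lam ^ 3 * (τ : ℂ))))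
      (((a1 + 2 * a2 * ((Real.tanh (η * (x - 4 * η ^ 2 * t - α)) : ℝ) : ℂ) + 3 * a3 * ((Real.tanh (η * (x - 4 * η ^ 2 * t - α)) : ℝ) : ℂ) ^ 2 + 4 * a4 * ((Real.tanh (η * (x - 4 * η ^ 2 * t - α)) : ℝ) : ℂ) ^ 3) * ((-4) * (η : ℂ) ^ 3 * (1 - ((Real.tanh (η * (x - 4 * η ^ 2 * t - α)) : ℝ) : ℂ) ^ 2)) + (a0 + a1 * ((Real.tanh (η * (x - 4 * η ^ 2 * t - α)) : ℝ) : ℂ) + a2 * ((Real.tanh (η * (x - 4 * η ^ 2 * t - α)) : ℝ) : ℂ) ^ 2 + a3 * ((Real.tanh (η * (x - 4 * η ^ 2 * t - α)) : ℝ) : ℂ) ^ 3 + a4 * ((Real.tanh (η * (x - 4 * η ^ 2 * t - α)) : ℝ) : ℂ) ^ 4) * (Complex.I * lam ^ 3)) * Complex.exp (Complex.I * (lam * (x : ℂ) + lam ^ 3 * (t : ℂ)))) t := by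
  have hw : HasDerivAt (fun τ : ℝ => η * (x - 4 * η ^ 2 * τ - α)) (η * (0 - 4 * η ^ 2 * 1 - 0)) t :=
    (((hasDerivAt_const t x).sub ((hasDerivAt_id t).const_mul (4 * η ^ 2))).sub
      (hasDerivAt_const t α)).const_mul η
  have hT : HasDerivAt (fun τ : ℝ => Real.tanh (η * (x - 4 * η ^ 2 * τ - α)))
      ((1 - Real.tanh (η * (x - 4 * η ^ 2 * t - α)) ^ 2) * (η * (0 - 4 * η ^ 2 * 1 - 0))) t :=
    (tanh_hasDerivAt _).comp t hw
  have hTc : HasDerivAt (fun τ : ℝ => ((Real.tanh (η * (x - 4 * η ^ 2 * τ - α)) : ℝ) : ℂ))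
      (((1 - Real.tanh (η * (x - 4 * η ^ 2 * t - α)) ^ 2) * (η * (0 - 4 * η ^ 2 * 1 - 0)) : ℝ) : ℂ) t :=
    hT.ofReal_comp
  have hE : HasDerivAt (fun τ : ℝ => Complex.exp (Complex.I * (lam * (x : ℂ) + lam ^ 3 * (τ : ℂ))))
      (Complex.exp (Complex.I * (lam * (x : ℂ) + lam ^ 3 * (t : ℂ))) * (Complex.I * lam ^ 3)) t := by
    have hlin : HasDerivAt (fun z : ℂ => Complex.I * (lam * (x : ℂ) + lam ^ 3 * z))
        (Complex.I * lam ^ 3) ((t : ℝ) : ℂ) := by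
      simpa using ((((hasDerivAt_id ((t : ℝ) : ℂ)).const_mul (lam ^ 3)).const_add
        (lam * (x : ℂ))).const_mul Complex.I)
    exact (hlin.comp_ofReal).cexp
  have hT2 : HasDerivAt (fun τ : ℝ => ((Real.tanh (η * (x - 4 * η ^ 2 * τ - α)) : ℝ) : ℂ) ^ 2)
      (2 * ((Real.tanh (η * (x - 4 * η ^ 2 * t - α)) : ℝ) : ℂ) *
        (((1 - Real.tanh (η * (x - 4 * η ^ 2 * t - α)) ^ 2) * (η * (0 - 4 * η ^ 2 * 1 - 0)) : ℝ) : ℂ)) t := by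
    simpa [Function.comp_def] using (hasDerivAt_pow 2 _).comp t hTc
  have hT3 : HasDerivAt (fun τ : ℝ => ((Real.tanh (η * (x - 4 * η ^ 2 * τ - α)) : ℝ) : ℂ) ^ 3)
      (3 * ((Real.tanh (η * (x - 4 * η ^ 2 * t - α)) : ℝ) : ℂ) ^ 2 *
        (((1 - Real.tanh (η * (x - 4 * η ^ 2 * t - α)) ^ 2) * (η * (0 - 4 * η ^ 2 * 1 - 0)) : ℝ) : ℂ)) t := by
    simpa [Function.comp_def] using (hasDerivAt_pow 3 _).comp t hTc
  have hT4 : HasDerivAt (fun τ : ℝ => ((Real.tanh (η * (x - 4 * η ^ 2 * τ - α)) : ℝ) : ℂ) ^ 4)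
      (4 * ((Real.tanh (η * (x - 4 * η ^ 2 * t - α)) : ℝ) : ℂ) ^ 3 *
        (((1 - Real.tanh (η * (x - 4 * η ^ 2 * t - α)) ^ 2) * (η * (0 - 4 * η ^ 2 * 1 - 0)) : ℝ) : ℂ)) t := by
    simpa [Function.comp_def] using (hasDerivAt_pow 4 _).comp t hTc
  have hP := ((((hTc.const_mul a1).const_add a0).add (hT2.const_mul a2)).add
      (hT3.const_mul a3)).add (hT4.const_mul a4)
  refine (hP.mul hE).congr_deriv ?_
  simp only [Pi.add_apply]
  push_cast
  ring

/-- For the one-soliton solution `A` of KdV and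
`g(x,t) = (1 + (2iη/λ)·tanh(η(x−4η²t−α)))·exp(i(λx+λ³t))` with `λ ≠ 0`,
the function `B := ∂ₓg` solves the linear equation with coupling `κ = 1/2`:
`∂ₜB + ∂ₓ[(1/2)·A·B + ∂ₓ²B] = 0`. -/
theorem one_soliton_exact_linear_wave_half_coupling
    (η α : ℝ) (hη : 0 < η) (lam : ℂ) (hlam : lam ≠ 0)
    (A : ℝ → ℝ → ℝ)
    (hA : ∀ x t : ℝ, A x t =
      12 * η ^ 2 * (1 / Real.cosh (η * (x - 4 * η ^ 2 * t - α))) ^ 2)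
    (g : ℝ → ℝ → ℂ)
    (hg : ∀ x t : ℝ, g x t =
      (1 + (2 * Complex.I * (η : ℂ) / lam) *
          (Real.tanh (η * (x - 4 * η ^ 2 * t - α)) : ℂ)) *
        Complex.exp (Complex.I * (lam * (x : ℂ) + lam ^ 3 * (t : ℂ))))
    (B : ℝ → ℝ → ℂ)
    (hB : ∀ x t : ℝ, B x t = deriv (fun y => g y t) x) :
    ∀ x t : ℝ,
      deriv (fun τ => B x τ) t +
        deriv (fun y => (1 / 2 : ℂ) * (A y t : ℂ) * B y t +
          deriv (deriv (fun y' => B y' t)) y) x = 0 := by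
  intro x t
  have hBform : ∀ (y τ : ℝ), B y τ =
      ((Complex.I*lam + (2)*Complex.I*(η:ℂ)^2*lam⁻¹) + ((2)*Complex.I^2*(η:ℂ)*lam*lam⁻¹) * ((Real.tanh (η * (y - 4 * η ^ 2 * τ - α)) : ℝ) : ℂ) + ((-2)*Complex.I*(η:ℂ)^2*lam⁻¹) * ((Real.tanh (η * (y - 4 * η ^ 2 * τ - α)) : ℝ) : ℂ) ^ 2) * Complex.exp (Complex.I * (lam * (y : ℂ) + lam ^ 3 * (τ : ℂ))) := by
    intro y τ
    rw [hB]
    rw [show (fun y' : ℝ => g y' τ) = (fun y' : ℝ => ((1 : ℂ) + (2 * Complex.I * (η : ℂ) / lam) * ((Real.tanh (η * (y' - 4 * η ^ 2 * τ - α)) : ℝ) : ℂ) + 0 * ((Real.tanh (η * (y' - 4 * η ^ 2 * τ - α)) : ℝ) : ℂ) ^ 2 + 0 * ((Real.tanh (η * (y' - 4 * η ^ 2 * τ - α)) : ℝ) : ℂ) ^ 3 + 0 * ((Real.tanh (η * (y' - 4 * η ^ 2 * τ - α)) : ℝ) : ℂ) ^ 4) * Complex.exp (Complex.I * (lam * (y'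 : ℂ) + lam ^ 3 * (τ : ℂ)))) from
      funext fun y' => by rw [hg]; ring]
    rw [(keyX η α τ lam (1 : ℂ) (2 * Complex.I * (η : ℂ) / lam) 0 0 0 y).deriv]
    ring
  have hD1 : deriv (fun y' : ℝ => B y' t) =
      fun y : ℝ => ((Complex.I^2*lam^2 + (4)*Complex.I^2*(η:ℂ)^2*lam*lam⁻¹) + ((-4)*Complex.I*(η:ℂ)^3*lam⁻¹ + (2)*Complex.I^3*(η:ℂ)*lam^2*lam⁻¹) * ((Real.tanh (η * (y - 4 * η ^ 2 * t - α)) : ℝ) : ℂ) + ((-4)*Complex.I^2*(η:ℂ)^2*lam*lam⁻¹) * ((Real.tanh (η * (y - 4 * η ^ 2 * t - α)) : ℝ) : ℂ) ^ 2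
        + ((4)*Complex.I*(η:ℂ)^3*lam⁻¹) * ((Real.tanh (η * (y - 4 * η ^ 2 * t - α)) : ℝ) : ℂ) ^ 3) * Complex.exp (Complex.I * (lam * (y : ℂ) + lam ^ 3 * (t : ℂ))) := by
    rw [show (fun y' : ℝ => B y' t) = (fun y' : ℝ => ((Complex.I*lam + (2)*Complex.I*(η:ℂ)^2*lam⁻¹) + ((2)*Complex.I^2*(η:ℂ)*lam*lam⁻¹) * ((Real.tanh (η * (y' - 4 * η ^ 2 * t - α)) : ℝ) : ℂ) + ((-2)*Complex.I*(η:ℂ)^2*lam⁻¹) * ((Real.tanh (η * (y' - 4 * η ^ 2 * t - α)) : ℝ) : ℂ) ^ 2 + 0 * ((Real.tanh (η * (y' - 4 * η ^ 2 * t - α)) : ℝ) : ℂ) ^ 3 + 0 * ((Real.tanh (η * (y' - 4 * η ^ 2 * t - α)) : ℝ) : ℂ) ^ 4) * Complex.exp (Complex.I * (lam * (y' : ℂ) + lam ^ 3 * (t : ℂ)))) from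
      funext fun y' => by rw [hBform]; ring]
    funext y
    rw [(keyX η α t lam (Complex.I*lam + (2)*Complex.I*(η:ℂ)^2*lam⁻¹) ((2)*Complex.I^2*(η:ℂ)*lam*lam⁻¹) ((-2)*Complex.I*(η:ℂ)^2*lam⁻¹) 0 0 y).deriv]
    ring
  have hD2 : ∀ y : ℝ, deriv (deriv (fun y' : ℝ => B y' t)) y =
      (((-4)*Complex.I*(η:ℂ)^4*lam⁻¹ + Complex.I^3*lam^3 + (6)*Complex.I^3*(η:ℂ)^2*lam^2*lam⁻¹) + ((-12)*Complex.I^2*(η:ℂ)^3*lam*lam⁻¹ + (2)*Complex.I^4*(η:ℂ)*lam^3*lam⁻¹) * ((Real.tanh (η * (y - 4 * η ^ 2 * t - α)) : ℝ) : ℂ) + ((16)*Complex.I*(η:ℂ)^4*lam⁻¹ + (-6)*Complex.I^3*(η:ℂ)^2*lam^2*lam⁻¹) * ((Real.tanh (η * (y - 4 * η ^ 2 * t - α)) : ℝ) : ℂ) ^ 2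
        + ((12)*Complex.I^2*(η:ℂ)^3*lam*lam⁻¹) * ((Real.tanh (η * (y - 4 * η ^ 2 * t - α)) : ℝ) : ℂ) ^ 3 + ((-12)*Complex.I*(η:ℂ)^4*lam⁻¹) * ((Real.tanh (η * (y - 4 * η ^ 2 * t - α)) : ℝ) : ℂ) ^ 4) * Complex.exp (Complex.I * (lam * (y : ℂ) + lam ^ 3 * (t : ℂ))) := by
    intro y
    rw [hD1]
    rw [show (fun y' : ℝ => ((Complex.I^2*lam^2 + (4)*Complex.I^2*(η:ℂ)^2*lam*lam⁻¹) + ((-4)*Complex.I*(η:ℂ)^3*lam⁻¹ + (2)*Complex.I^3*(η:ℂ)*lam^2*lam⁻¹) * ((Real.tanh (η * (y' - 4 * η ^ 2 * t - α)) : ℝ) : ℂ) + ((-4)*Complex.I^2*(η:ℂ)^2*lam*lam⁻¹) * ((Real.tanh (η * (y' - 4 * η ^ 2 * t - α)) : ℝ) : ℂ) ^ 2 + ((4)*Complex.I*(η:ℂ)^3*lam⁻¹) * ((Real.tanh (η * (y' - 4 * η ^ 2 * t - α)) : ℝ) : ℂ) ^ 3) * Complex.exp (Complex.I * (lam * (y'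 : ℂ) + lam ^ 3 * (t : ℂ)))) = (fun y' : ℝ => ((Complex.I^2*lam^2 + (4)*Complex.I^2*(η:ℂ)^2*lam*lam⁻¹) + ((-4)*Complex.I*(η:ℂ)^3*lam⁻¹ + (2)*Complex.I^3*(η:ℂ)*lam^2*lam⁻¹) * ((Real.tanh (η * (y' - 4 * η ^ 2 * t - α)) : ℝ) : ℂ) + ((-4)*Complex.I^2*(η:ℂ)^2*lam*lam⁻¹) * ((Real.tanh (η * (y' - 4 * η ^ 2 * t - α)) : ℝ) : ℂ) ^ 2 + ((4)*Complex.I*(η:ℂ)^3*lam⁻¹) * ((Real.tanh (η * (y' - 4 * η ^ 2 * t - α)) : ℝ) : ℂ) ^ 3 + 0 * ((Real.tanh (η * (y' - 4 * η ^ 2 * t - α)) : ℝ) : ℂ) ^ 4) * Complex.exp (Complex.I * (lam * (y' : ℂ) + lam ^ 3 * (t : ℂ)))) from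
      funext fun y' => by ring]
    rw [(keyX η α t lam (Complex.I^2*lam^2 + (4)*Complex.I^2*(η:ℂ)^2*lam*lam⁻¹) ((-4)*Complex.I*(η:ℂ)^3*lam⁻¹ + (2)*Complex.I^3*(η:ℂ)*lam^2*lam⁻¹) ((-4)*Complex.I^2*(η:ℂ)^2*lam*lam⁻¹) ((4)*Complex.I*(η:ℂ)^3*lam⁻¹) 0 y).deriv]
    ring
  have hFfun : (fun y : ℝ => (1 / 2 : ℂ) * (A y t : ℂ) * B y t +
      deriv (deriv (fun y' : ℝ => B y' t)) y) = (fun y : ℝ => (((6)*Complex.I*(η:ℂ)^2*lam + (8)*Complex.I*(η:ℂ)^4*lam⁻¹ + Complex.I^3*lam^3 + (6)*Complex.I^3*(η:ℂ)^2*lam^2*lam⁻¹) + ((2)*Complex.I^4*(η:ℂ)*lam^3*lam⁻¹) * ((Real.tanh (η * (y - 4 * η ^ 2 * t - α)) : ℝ) : ℂ) + ((-6)*Complex.I*(η:ℂ)^2*lam + (-8)*Complex.I*(η:ℂ)^4*lam⁻¹ + (-6)*Complex.I^3*(η:ℂ)^2*lam^2*lam⁻¹) * ((Real.tanh (η * (y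 - 4 * η ^ 2 * t - α)) : ℝ) : ℂ) ^ 2 + (0) * ((Real.tanh (η * (y - 4 * η ^ 2 * t - α)) : ℝ) : ℂ) ^ 3 + (0) * ((Real.tanh (η * (y - 4 * η ^ 2 * t - α)) : ℝ) : ℂ) ^ 4) * Complex.exp (Complex.I * (lam * (y : ℂ) + lam ^ 3 * (t : ℂ)))) := by
    funext y
    rw [hD2 y, hA, hBform, sech_sq_eq]
    push_cast
    ring
  have h1 : deriv (fun τ : ℝ => B x τ) t = ((((2)*Complex.I^2*(η:ℂ)*lam*lam⁻¹) + 2 * ((-2)*Complex.I*(η:ℂ)^2*lam⁻¹) * ((Real.tanh (η * (x - 4 * η ^ 2 * t - α)) : ℝ) : ℂ) + 3 * 0 * ((Real.tanh (η * (x - 4 * η ^ 2 * t - α)) : ℝ) : ℂ) ^ 2 + 4 * 0 * ((Real.tanh (η * (x - 4 * η ^ 2 * t - α)) : ℝ) : ℂ) ^ 3) * ((-4) * (η : ℂ) ^ 3 * (1 - ((Real.tanh (η * (x - 4 * η ^ 2 * t - α)) : ℝ) : ℂ) ^ 2)) + ((Complex.I*lam + (2)*Complex.I*(η:ℂ)^2*lam⁻¹)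 + ((2)*Complex.I^2*(η:ℂ)*lam*lam⁻¹) * ((Real.tanh (η * (x - 4 * η ^ 2 * t - α)) : ℝ) : ℂ) + ((-2)*Complex.I*(η:ℂ)^2*lam⁻¹) * ((Real.tanh (η * (x - 4 * η ^ 2 * t - α)) : ℝ) : ℂ) ^ 2 + 0 * ((Real.tanh (η * (x - 4 * η ^ 2 * t - α)) : ℝ) : ℂ) ^ 3 + 0 * ((Real.tanh (η * (x - 4 * η ^ 2 * t - α)) : ℝ) : ℂ) ^ 4) * (Complex.I * lam ^ 3)) * Complex.exp (Complex.I * (lam * (x : ℂ) + lam ^ 3 * (t : ℂ))) := by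
    rw [show (fun τ : ℝ => B x τ) = (fun τ : ℝ => ((Complex.I*lam + (2)*Complex.I*(η:ℂ)^2*lam⁻¹) + ((2)*Complex.I^2*(η:ℂ)*lam*lam⁻¹) * ((Real.tanh (η * (x - 4 * η ^ 2 * τ - α)) : ℝ) : ℂ) + ((-2)*Complex.I*(η:ℂ)^2*lam⁻¹) * ((Real.tanh (η * (x - 4 * η ^ 2 * τ - α)) : ℝ) : ℂ) ^ 2 + 0 * ((Real.tanh (η * (x - 4 * η ^ 2 * τ - α)) : ℝ) : ℂ) ^ 3 + 0 * ((Real.tanh (η * (x - 4 * η ^ 2 * τ - α)) : ℝ) : ℂ) ^ 4) * Complex.exp (Complex.I * (lam * (x : ℂ) + lam ^ 3 * (τ : ℂ)))) from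
      funext fun τ => by rw [hBform]; ring]
    exact (keyT η α x lam (Complex.I*lam + (2)*Complex.I*(η:ℂ)^2*lam⁻¹) ((2)*Complex.I^2*(η:ℂ)*lam*lam⁻¹) ((-2)*Complex.I*(η:ℂ)^2*lam⁻¹) 0 0 t).deriv
  have h2 : deriv (fun y : ℝ => (1 / 2 : ℂ) * (A y t : ℂ) * B y t +
      deriv (deriv (fun y' : ℝ => B y' t)) y) x = ((((2)*Complex.I^4*(η:ℂ)*lam^3*lam⁻¹) + 2 * ((-6)*Complex.I*(η:ℂ)^2*lam + (-8)*Complex.I*(η:ℂ)^4*lam⁻¹ + (-6)*Complex.I^3*(η:ℂ)^2*lam^2*lam⁻¹) * ((Real.tanh (η * (x - 4 * η ^ 2 * t - α)) : ℝ) : ℂ) + 3 * (0) * ((Real.tanh (η * (x - 4 * η ^ 2 * t - α)) : ℝ) : ℂ) ^ 2 + 4 * (0) * ((Real.tanh (η * (x - 4 * η ^ 2 * t - α)) : ℝ) : ℂ) ^ 3) * ((η : ℂ) * (1 - ((Real.tanh (η * (x - 4 * η ^ 2 * t - α)) : ℝ) : ℂ) ^ 2)) + (((6)*Complex.I*(η:ℂ)^2*lam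 + (8)*Complex.I*(η:ℂ)^4*lam⁻¹ + Complex.I^3*lam^3 + (6)*Complex.I^3*(η:ℂ)^2*lam^2*lam⁻¹) + ((2)*Complex.I^4*(η:ℂ)*lam^3*lam⁻¹) * ((Real.tanh (η * (x - 4 * η ^ 2 * t - α)) : ℝ) : ℂ) + ((-6)*Complex.I*(η:ℂ)^2*lam + (-8)*Complex.I*(η:ℂ)^4*lam⁻¹ + (-6)*Complex.I^3*(η:ℂ)^2*lam^2*lam⁻¹) * ((Real.tanh (η * (x - 4 * η ^ 2 * t - α)) : ℝ) : ℂ) ^ 2 + (0) * ((Real.tanh (η * (x - 4 * η ^ 2 * t - α)) : ℝ) : ℂ) ^ 3 + (0) * ((Real.tanh (η * (x - 4 * η ^ 2 * t - α)) : ℝ) : ℂ) ^ 4) * (Complex.I * lam)) * Complex.exp (Complex.I * (lam * (x : ℂ) + lam ^ 3 * (t : ℂ))) := by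
    rw [hFfun]
    exact (keyX η α t lam ((6)*Complex.I*(η:ℂ)^2*lam + (8)*Complex.I*(η:ℂ)^4*lam⁻¹ + Complex.I^3*lam^3 + (6)*Complex.I^3*(η:ℂ)^2*lam^2*lam⁻¹) ((2)*Complex.I^4*(η:ℂ)*lam^3*lam⁻¹) ((-6)*Complex.I*(η:ℂ)^2*lam + (-8)*Complex.I*(η:ℂ)^4*lam⁻¹ + (-6)*Complex.I^3*(η:ℂ)^2*lam^2*lam⁻¹) (0) (0) x).deriv
  rw [h1, h2]
  set u : ℂ := ((Real.tanh (η * (x - 4 * η ^ 2 * t - α)) : ℝ) : ℂ) with hu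
  set Ex : ℂ := Complex.exp (Complex.I * (lam * (x : ℂ) + lam ^ 3 * (t : ℂ))) with hEx
  have hinv : lam * lam⁻¹ = 1 := mul_inv_cancel₀ hlam
  linear_combination ((6)*(η:ℂ)^2*lam^2 + (-6)*(η:ℂ)^2*lam^2*u^2 + (-6)*(η:ℂ)^2*lam^3*lam⁻¹ + (6)*(η:ℂ)^2*lam^3*lam⁻¹*u^2 + (-12)*Complex.I*(η:ℂ)^3*lam^2*lam⁻¹*u + (12)*Complex.I*(η:ℂ)^3*lam^2*lam⁻¹*u^3 + Complex.I^2*lam^4 + (8)*Complex.I^2*(η:ℂ)^2*lam^3*lam⁻¹ + (-8)*Complex.I^2*(η:ℂ)^2*lam^3*lam⁻¹*u^2 + (2)*Complex.I^3*(η:ℂ)*lam^4*lam⁻¹*u) * Ex * Complex.I_sq + ((6)*(η:ℂ)^2*lam^2 + (-6)*(η:ℂ)^2*lam^2*u^2 + (12)*Complex.I*(η:ℂ)^3*lam*u + (-12)*Complex.I*(η:ℂ)^3*lam*u^3) * Ex * hinv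
end

section
/- Let A : ℝ² → ℝ be three times continuously differentiable and satisfy the KdV equation ∂_t A + ∂_x[(1/2)A² + ∂_x²A] = 0 at every point. Let λ ∈ ℂ and let f : ℝ² → ℂ be three times continuously differentiable and satisfy both Lax pair equations ∂_x²f = −(λ²/4)f − (1/6)A·f and ∂_t f = (1/6)(∂_x A)·f + (λ² − A/3)·∂_x f at every point. Then, for either choice of sign, the function B(x,t) := ∂_x[f(x,t)·exp(±(i/2)(λx + λ³t))] satisfies the linear equation with coupling constant κ = 1/2, namely ∂_t B + ∂_x[(1/2)·A·B + ∂_x²B] = 0, at every point (x,t) ∈ ℝ². -/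
open Complex

private lemma pd_fst' {F : ℝ × ℝ → ℂ} (hF : Differentiable ℝ F) (x t : ℝ) :
    deriv (fun y => F (y, t)) x = fderiv ℝ F (x, t) (1, 0) :=
  ((hF (x, t)).hasFDerivAt.comp_hasDerivAt x
      (HasDerivAt.prodMk (hasDerivAt_id x) (hasDerivAt_const x t))).deriv

private lemma pd_snd' {F : ℝ × ℝ → ℂ} (hF : Differentiable ℝ F) (x t : ℝ) :
    deriv (fun τ => F (x, τ)) t = fderiv ℝ F (x, t) (0, 1) :=
  ((hF (x, t)).hasFDerivAt.comp_hasDerivAt t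
      (HasDerivAt.prodMk (hasDerivAt_const t x) (hasDerivAt_id t))).deriv

private lemma clairaut_aux {F : ℝ → ℝ → ℂ}
    (hF : ContDiff ℝ 2 (fun p : ℝ × ℝ => F p.1 p.2)) (x t : ℝ) :
    deriv (fun τ => deriv (fun y => F y τ) x) t =
      deriv (fun y => deriv (fun τ => F y τ) t) x := by
  set G : ℝ × ℝ → ℂ := fun p => F p.1 p.2 with hG
  have hd : Differentiable ℝ G := hF.differentiable (by norm_num)
  have hfd : ContDiff ℝ 1 (fderiv ℝ G) := by
    have := (contDiff_succ_iff_fderiv (n := 1)).mp (by exact_mod_cast hF)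
    exact this.2.2
  have hfd' : Differentiable ℝ (fderiv ℝ G) := hfd.differentiable one_ne_zero
  have happly : ∀ v : ℝ × ℝ, Differentiable ℝ (fun p => fderiv ℝ G p v) := by
    intro v
    exact hfd'.clm_apply (differentiable_const v)
  have hGv : ∀ (v : ℝ × ℝ) (p : ℝ × ℝ),
      fderiv ℝ (fun q => fderiv ℝ G q v) p = (fderiv ℝ (fderiv ℝ G) p).flip v := by
    intro v p
    have hL : HasFDerivAt (fun q => (ContinuousLinearMap.apply ℝ ℂ v) (fderiv ℝ G q))
        ((ContinuousLinearMap.apply ℝ ℂ v).comp (fderiv ℝ (fderiv ℝ G) p)) p :=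
      ((ContinuousLinearMap.apply ℝ ℂ v).hasFDerivAt).comp p (hfd' p).hasFDerivAt
    have := hL.fderiv
    rw [show (fun q => (ContinuousLinearMap.apply ℝ ℂ v) (fderiv ℝ G q))
        = fun q => fderiv ℝ G q v from rfl] at this
    rw [this]
    exact ContinuousLinearMap.ext fun w => rfl
  have hsymm := second_derivative_symmetric (f := G) (f' := fderiv ℝ G)
    (f'' := fderiv ℝ (fderiv ℝ G) (x, t))
    (fun y => (hd y).hasFDerivAt) (hfd' (x, t)).hasFDerivAt
  calc deriv (fun τ => deriv (fun y => F y τ) x) t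
      = deriv (fun τ => fderiv ℝ G (x, τ) (1, 0)) t := by
        congr 1; funext τ; exact pd_fst' hd x τ
    _ = fderiv ℝ (fun q => fderiv ℝ G q (1, 0)) (x, t) (0, 1) := pd_snd' (happly _) x t
    _ = fderiv ℝ (fderiv ℝ G) (x, t) (0, 1) (1, 0) := by rw [hGv]; rfl
    _ = fderiv ℝ (fderiv ℝ G) (x, t) (1, 0) (0, 1) := hsymm _ _
    _ = fderiv ℝ (fun q => fderiv ℝ G q (0, 1)) (x, t) (1, 0) := by rw [hGv]; rfl
    _ = deriv (fun y => fderiv ℝ G (y, t) (0, 1)) x := (pd_fst' (happly _) x t).symm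
    _ = deriv (fun y => deriv (fun τ => F y τ) t) x := by
        congr 1; funext y; exact (pd_snd' hd y t).symm

/-- The exponential factor. -/
private noncomputable def Efn (ε lam : ℂ) (y τ : ℝ) : ℂ :=
  Complex.exp (ε * (Complex.I / 2) * (lam * (y : ℂ) + lam ^ 3 * (τ : ℂ)))

private lemma Efn_hasDerivAt_x (ε lam : ℂ) (τ y : ℝ) :
    HasDerivAt (fun y' : ℝ => Efn ε lam y' τ)
      (ε * (Complex.I / 2) * lam * Efn ε lam y τ) y := by
  have h1 : HasDerivAt (fun y' : ℝ => ((y' : ℂ))) ((1 : ℝ) : ℂ) y :=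
    (hasDerivAt_id y).ofReal_comp
  have h2 : HasDerivAt
      (fun y' : ℝ => ε * (Complex.I / 2) * (lam * (y' : ℂ) + lam ^ 3 * (τ : ℂ)))
      (ε * (Complex.I / 2) * (lam * 1)) y :=
    ((h1.const_mul lam).add_const (lam ^ 3 * (τ : ℂ))).const_mul (ε * (Complex.I / 2))
  have h3 := h2.cexp
  refine h3.congr_deriv ?_
  unfold Efn
  ring

private lemma Efn_hasDerivAt_t (ε lam : ℂ) (y τ : ℝ) :
    HasDerivAt (fun τ' : ℝ => Efn ε lam y τ')
      (ε * (Complex.I / 2) * lam ^ 3 * Efn ε lam y τ) τ := by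
  have h1 : HasDerivAt (fun τ' : ℝ => ((τ' : ℂ))) ((1 : ℝ) : ℂ) τ :=
    (hasDerivAt_id τ).ofReal_comp
  have h2 : HasDerivAt
      (fun τ' : ℝ => ε * (Complex.I / 2) * (lam * (y : ℂ) + lam ^ 3 * (τ' : ℂ)))
      (ε * (Complex.I / 2) * (lam ^ 3 * 1)) τ :=
    (((h1.const_mul (lam ^ 3)).const_add (lam * (y : ℂ))).const_mul (ε * (Complex.I / 2)))
  have h3 := h2.cexp
  refine h3.congr_deriv ?_
  unfold Efn
  ring

private lemma Efn_contDiff (ε lam : ℂ) :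
    ContDiff ℝ 2 (fun p : ℝ × ℝ => Efn ε lam p.1 p.2) := by
  apply (Complex.contDiff_exp (𝕜 := ℝ)).comp
  exact contDiff_const.mul
    ((contDiff_const.mul (Complex.ofRealCLM.contDiff.comp contDiff_fst)).add
      (contDiff_const.mul (Complex.ofRealCLM.contDiff.comp contDiff_snd)))

/-- If `A` is a C³ solution of KdV and `f` is a C³ simultaneous
solution of both Lax pair equations with spectral parameter `λ`, then for
either choice of sign `ε = ±1`, the function
`B := ∂ₓ[f·exp(ε(i/2)(λx+λ³t))]` solves the linear equation with `κ = 1/2`. -/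
theorem lax_eigenfunction_gives_half_coupling_solution
    (A : ℝ → ℝ → ℝ) (hA : ContDiff ℝ 3 (fun p : ℝ × ℝ => A p.1 p.2))
    (hKdV : ∀ x t : ℝ,
      deriv (fun τ => A x τ) t +
        deriv (fun y => (1 / 2) * (A y t) ^ 2 +
          deriv (deriv (fun y' => A y' t)) y) x = 0)
    (lam : ℂ) (f : ℝ → ℝ → ℂ)
    (hf : ContDiff ℝ 3 (fun p : ℝ × ℝ => f p.1 p.2))
    (hLax1 : ∀ x t : ℝ,
      deriv (deriv (fun y => f y t)) x =
        -(lam ^ 2 / 4) * f x t - (1 / 6) * (A x t : ℂ) * f x t)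
    (hLax2 : ∀ x t : ℝ,
      deriv (fun τ => f x τ) t =
        (1 / 6) * (deriv (fun y => A y t) x : ℂ) * f x t +
          (lam ^ 2 - (A x t : ℂ) / 3) * deriv (fun y => f y t) x)
    (ε : ℂ) (hε : ε = 1 ∨ ε = -1)
    (B : ℝ → ℝ → ℂ)
    (hB : ∀ x t : ℝ, B x t =
      deriv (fun y => f y t *
        Complex.exp (ε * (Complex.I / 2) * (lam * (y : ℂ) + lam ^ 3 * (t : ℂ)))) x) :
    ∀ x t : ℝ,
      deriv (fun τ => B x τ) t +
        deriv (fun y => (1 / 2 : ℂ) * (A y t : ℂ) * B y t +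
          deriv (deriv (fun y' => B y' t)) y) x = 0 := by
  intro x t
  have hε2 : ε ^ 2 = 1 := by rcases hε with rfl | rfl <;> ring
  have hc2 : (ε * (Complex.I / 2) * lam) ^ 2 = -(lam ^ 2) / 4 := by
    have h := Complex.I_sq
    linear_combination (Complex.I ^ 2 * lam ^ 2 / 4) * hε2 + (lam ^ 2 / 4) * h
  have hfd2 : Differentiable ℝ (fun p : ℝ × ℝ => f p.1 p.2) :=
    hf.differentiable (by norm_num)
  have hAd2 : Differentiable ℝ (fun p : ℝ × ℝ => A p.1 p.2) :=
    hA.differentiable (by norm_num)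
  -- basic partial derivatives of f and A
  have hDx : ∀ (y τ : ℝ),
      HasDerivAt (fun y' => f y' τ) (deriv (fun y' => f y' τ) y) y := by
    intro y τ
    have : DifferentiableAt ℝ (fun y' => f y' τ) y :=
      (hfd2 (y, τ)).comp (f := fun y' : ℝ => (y', τ)) y (DifferentiableAt.prodMk differentiableAt_fun_id (differentiableAt_const _))
    exact this.hasDerivAt
  have hDt : ∀ (y τ : ℝ),
      HasDerivAt (fun τ' => f y τ') (deriv (fun τ' => f y τ') τ) τ := by
    intro y τ
    have : DifferentiableAt ℝ (fun τ' => f y τ') τ :=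
      (hfd2 (y, τ)).comp (f := fun τ' : ℝ => (y, τ')) τ (DifferentiableAt.prodMk (differentiableAt_const _) differentiableAt_fun_id)
    exact this.hasDerivAt
  have hDA : ∀ (y τ : ℝ),
      HasDerivAt (fun y' => A y' τ) (deriv (fun y' => A y' τ) y) y := by
    intro y τ
    have : DifferentiableAt ℝ (fun y' => A y' τ) y :=
      (hAd2 (y, τ)).comp (f := fun y' : ℝ => (y', τ)) y (DifferentiableAt.prodMk differentiableAt_fun_id (differentiableAt_const _))
    exact this.hasDerivAt
  -- second x-derivative of f, via Lax 1
  have hDxx : ∀ (y τ : ℝ),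
      HasDerivAt (fun y' => deriv (fun y'' => f y'' τ) y')
        (-(lam ^ 2 / 4) * f y τ - (1 / 6) * (A y τ : ℂ) * f y τ) y := by
    intro y τ
    have h1 : ContDiff ℝ 3 (fun y' : ℝ => f y' τ) :=
      hf.comp (ContDiff.prodMk contDiff_id contDiff_const)
    have h2 : ContDiff ℝ 2 (deriv (fun y' : ℝ => f y' τ)) := by
      have h3 : ContDiff ℝ (2 + 1) (fun y' : ℝ => f y' τ) := by exact_mod_cast h1
      exact ((contDiff_succ_iff_deriv (n := 2)).mp h3).2.2
    have h3 := ((h2.differentiable (by norm_num)) y).hasDerivAt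
    rwa [hLax1 y τ] at h3
  -- the exponential factor
  have hEx := Efn_hasDerivAt_x ε lam
  have hEt := Efn_hasDerivAt_t ε lam
  have hB' : ∀ (X T : ℝ), B X T = deriv (fun y => f y T * Efn ε lam y T) X :=
    fun X T => hB X T
  -- x-derivative of g = f * E
  have hGx : ∀ (y τ : ℝ),
      HasDerivAt (fun y' => f y' τ * Efn ε lam y' τ)
        (deriv (fun y' => f y' τ) y * Efn ε lam y τ
          + ε * (Complex.I / 2) * lam * (f y τ * Efn ε lam y τ)) y := by
    intro y τ
    have h := (hDx y τ).fun_mul (hEx τ y)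
    refine h.congr_deriv ?_
    ring
  have hBval : ∀ (y τ : ℝ), B y τ =
      deriv (fun y' => f y' τ) y * Efn ε lam y τ
        + ε * (Complex.I / 2) * lam * (f y τ * Efn ε lam y τ) := by
    intro y τ
    rw [hB' y τ, (hGx y τ).deriv]
  -- second x-derivative of g (i.e. x-derivative of B)
  have hV2 : ∀ (y τ : ℝ),
      HasDerivAt (fun y' => B y' τ)
        ((-(lam ^ 2 / 4) * f y τ - (1 / 6) * (A y τ : ℂ) * f y τ) * Efn ε lam y τ
          + deriv (fun y' => f y' τ) y * (ε * (Complex.I / 2) * lam * Efn ε lam y τ)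
          + ε * (Complex.I / 2) * lam *
            (deriv (fun y' => f y' τ) y * Efn ε lam y τ
              + f y τ * (ε * (Complex.I / 2) * lam * Efn ε lam y τ))) y := by
    intro y τ
    have hfun : (fun y' => B y' τ) = fun y' =>
        deriv (fun y'' => f y'' τ) y' * Efn ε lam y' τ
          + ε * (Complex.I / 2) * lam * (f y' τ * Efn ε lam y' τ) :=
      funext fun y' => hBval y' τ
    rw [hfun]
    exact ((hDxx y τ).mul (hEx τ y)).add
      (((hDx y τ).mul (hEx τ y)).const_mul (ε * (Complex.I / 2) * lam))
  have hderivB : ∀ (τ : ℝ), deriv (fun y' => B y' τ) = fun y =>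
      (-(lam ^ 2 / 4) * f y τ - (1 / 6) * (A y τ : ℂ) * f y τ) * Efn ε lam y τ
        + deriv (fun y' => f y' τ) y * (ε * (Complex.I / 2) * lam * Efn ε lam y τ)
        + ε * (Complex.I / 2) * lam *
          (deriv (fun y' => f y' τ) y * Efn ε lam y τ
            + f y τ * (ε * (Complex.I / 2) * lam * Efn ε lam y τ)) :=
    fun τ => funext fun y => (hV2 y τ).deriv
  -- third x-derivative of g
  have hV3 : ∀ (y : ℝ),
      HasDerivAt (fun y' =>
        (-(lam ^ 2 / 4) * f y' t - (1 / 6) * (A y' t : ℂ) * f y' t) * Efn ε lam y' t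
          + deriv (fun y'' => f y'' t) y' * (ε * (Complex.I / 2) * lam * Efn ε lam y' t)
          + ε * (Complex.I / 2) * lam *
            (deriv (fun y'' => f y'' t) y' * Efn ε lam y' t
              + f y' t * (ε * (Complex.I / 2) * lam * Efn ε lam y' t)))
        ((-(lam ^ 2 / 4) * deriv (fun y' => f y' t) y
            - (1 / 6) * ((deriv (fun y' => A y' t) y : ℝ) : ℂ) * f y t
            - (1 / 6) * (A y t : ℂ) * deriv (fun y' => f y' t) y) * Efn ε lam y t
          + 3 * (ε * (Complex.I / 2) * lam) *
              ((-(lam ^ 2 / 4) * f y t - (1 / 6) * (A y t : ℂ) * f y t) * Efn ε lam y t)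
          + 3 * (ε * (Complex.I / 2) * lam) ^ 2 *
              (deriv (fun y' => f y' t) y * Efn ε lam y t)
          + (ε * (Complex.I / 2) * lam) ^ 3 * (f y t * Efn ε lam y t)) y := by
    intro y
    have t1 : HasDerivAt (fun y' =>
        -(lam ^ 2 / 4) * f y' t - (1 / 6) * (A y' t : ℂ) * f y' t)
        (-(lam ^ 2 / 4) * deriv (fun y' => f y' t) y
          - ((1 / 6) * ((deriv (fun y' => A y' t) y : ℝ) : ℂ) * f y t
            + (1 / 6) * (A y t : ℂ) * deriv (fun y' => f y' t) y)) y := by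
      exact ((hDx y t).const_mul (-(lam ^ 2 / 4))).sub
        ((((hDA y t).ofReal_comp).const_mul (1 / 6)).mul (hDx y t))
    have h := ((t1.fun_mul (hEx t y)).add
        ((hDxx y t).fun_mul ((hEx t y).const_mul (ε * (Complex.I / 2) * lam)))).add
      ((((hDxx y t).fun_mul (hEx t y)).add
        ((hDx y t).fun_mul ((hEx t y).const_mul (ε * (Complex.I / 2) * lam)))).const_mul
          (ε * (Complex.I / 2) * lam))
    refine h.congr_deriv ?_
    ring
  -- t-derivative of g, via Lax 2
  have hGt : ∀ (y τ : ℝ),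
      HasDerivAt (fun τ' => f y τ' * Efn ε lam y τ')
        (((1 / 6) * (deriv (fun y' => A y' τ) y : ℂ) * f y τ
            + (lam ^ 2 - (A y τ : ℂ) / 3) * deriv (fun y' => f y' τ) y) * Efn ε lam y τ
          + f y τ * (ε * (Complex.I / 2) * lam ^ 3 * Efn ε lam y τ)) τ := by
    intro y τ
    have h := (hDt y τ).mul (hEt y τ)
    rwa [hLax2 y τ] at h
  -- the pointwise identity M = 0
  have hM : ∀ y : ℝ,
      (1 / 2 : ℂ) * (A y t : ℂ) * B y t
        + ((-(lam ^ 2 / 4) * deriv (fun y' => f y' t) y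
            - (1 / 6) * ((deriv (fun y' => A y' t) y : ℝ) : ℂ) * f y t
            - (1 / 6) * (A y t : ℂ) * deriv (fun y' => f y' t) y) * Efn ε lam y t
          + 3 * (ε * (Complex.I / 2) * lam) *
              ((-(lam ^ 2 / 4) * f y t - (1 / 6) * (A y t : ℂ) * f y t) * Efn ε lam y t)
          + 3 * (ε * (Complex.I / 2) * lam) ^ 2 *
              (deriv (fun y' => f y' t) y * Efn ε lam y t)
          + (ε * (Complex.I / 2) * lam) ^ 3 * (f y t * Efn ε lam y t)) =
      -(((1 / 6) * (deriv (fun y' => A y' t) y : ℂ) * f y t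
            + (lam ^ 2 - (A y t : ℂ) / 3) * deriv (fun y' => f y' t) y) * Efn ε lam y t
          + f y t * (ε * (Complex.I / 2) * lam ^ 3 * Efn ε lam y t)) := by
    intro y
    have hcd : deriv (fun y' => ((A y' t : ℝ) : ℂ)) y
        = ((deriv (fun y' => A y' t) y : ℝ) : ℂ) := ((hDA y t).ofReal_comp).deriv
    rw [hBval y t]
    linear_combination (3 * deriv (fun y' => f y' t) y * Efn ε lam y t
      + (ε * (Complex.I / 2) * lam) * f y t * Efn ε lam y t) * hc2
      + ((1 / 6 : ℂ) * f y t * Efn ε lam y t) * hcd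
  -- rewrite the second term of the goal
  have hfun2 : (fun y => (1 / 2 : ℂ) * (A y t : ℂ) * B y t
      + deriv (deriv (fun y' => B y' t)) y)
      = fun y => -((((1 / 6) * (deriv (fun y' => A y' t) y : ℂ) * f y t
            + (lam ^ 2 - (A y t : ℂ) / 3) * deriv (fun y' => f y' t) y) * Efn ε lam y t
          + f y t * (ε * (Complex.I / 2) * lam ^ 3 * Efn ε lam y t))) := by
    funext y
    rw [hderivB t, (hV3 y).deriv]
    exact hM y
  -- rewrite the first term via Clairaut
  have hg2 : ContDiff ℝ 2 (fun p : ℝ × ℝ => f p.1 p.2 * Efn ε lam p.1 p.2) :=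
    (hf.of_le (by norm_num)).mul (Efn_contDiff ε lam)
  have hfirst : deriv (fun τ => B x τ) t =
      deriv (fun y => (((1 / 6) * (deriv (fun y' => A y' t) y : ℂ) * f y t
            + (lam ^ 2 - (A y t : ℂ) / 3) * deriv (fun y' => f y' t) y) * Efn ε lam y t
          + f y t * (ε * (Complex.I / 2) * lam ^ 3 * Efn ε lam y t))) x := by
    have e1 : (fun τ => B x τ)
        = fun τ => deriv (fun y => f y τ * Efn ε lam y τ) x :=
      funext fun τ => hB' x τ
    rw [e1, clairaut_aux (F := fun y τ => f y τ * Efn ε lam y τ) hg2 x t]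
    congr 1
    funext y
    exact (hGt y t).deriv
  rw [hfirst, hfun2]
  rw [deriv.fun_neg]
  ring
end

section
/- Let A : ℝ² → ℝ be three times continuously differentiable, let λ ∈ ℂ, and let f : ℝ² → ℂ be three times continuously differentiable with f(x,t) ≠ 0 for every (x,t), satisfying both Lax pair equations ∂_x²f = −(λ²/4)f − (1/6)A·f and ∂_t f = (1/6)(∂_x A)·f + (λ² − A/3)·∂_x f at every point. Then A satisfies the KdV equation: ∂_t A + ∂_x[(1/2)A² + ∂_x²A] = 0 at every point (x,t) ∈ ℝ². -/
open Complex

variable {E : Type*} [NormedAddCommGroup E] [NormedSpace ℝ E]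

/-- Partial derivative in first coordinate as a `HasDerivAt`. -/
lemma pd1 (g : ℝ × ℝ → E) {x t : ℝ} (hg : DifferentiableAt ℝ g (x, t)) :
    HasDerivAt (fun y => g (y, t)) (fderiv ℝ g (x, t) (1, 0)) x := by
  have h1 : HasDerivAt (fun y : ℝ => (y, t)) ((1 : ℝ), (0 : ℝ)) x :=
    (hasDerivAt_id x).prodMk (hasDerivAt_const x t)
  exact hg.hasFDerivAt.comp_hasDerivAt x h1

lemma pd2 (g : ℝ × ℝ → E) {x t : ℝ} (hg : DifferentiableAt ℝ g (x, t)) :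
    HasDerivAt (fun τ => g (x, τ)) (fderiv ℝ g (x, t) (0, 1)) t := by
  have h1 : HasDerivAt (fun τ : ℝ => (x, τ)) ((0 : ℝ), (1 : ℝ)) t :=
    (hasDerivAt_const t x).prodMk (hasDerivAt_id t)
  exact hg.hasFDerivAt.comp_hasDerivAt t h1

lemma contDiff_pd {n m : WithTop ℕ∞} (g : ℝ × ℝ → E) (v : ℝ × ℝ) (hg : ContDiff ℝ n g)
    (h : m + 1 ≤ n) : ContDiff ℝ m (fun p => fderiv ℝ g p v) :=
  (ContinuousLinearMap.apply ℝ E v).contDiff.comp (hg.fderiv_right h)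

/-- Clairaut / symmetry of mixed partials for C² functions. -/
lemma clairaut12 (g : ℝ × ℝ → E) (hg : ContDiff ℝ 2 g) (p : ℝ × ℝ) :
    fderiv ℝ (fun q => fderiv ℝ g q (1, 0)) p (0, 1) =
    fderiv ℝ (fun q => fderiv ℝ g q (0, 1)) p (1, 0) := by
  have hdg : Differentiable ℝ (fderiv ℝ g) :=
    (hg.fderiv_right (m := 1) (by norm_num)).differentiable (by norm_num)
  have h1 : ∀ w : ℝ × ℝ, fderiv ℝ (fun q => fderiv ℝ g q w) p =
      (ContinuousLinearMap.apply ℝ E w).comp (fderiv ℝ (fderiv ℝ g) p) := fun w =>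
    ((ContinuousLinearMap.apply ℝ E w).hasFDerivAt.comp p (hdg p).hasFDerivAt).fderiv
  rw [h1, h1]
  simp only [ContinuousLinearMap.coe_comp', Function.comp_apply,
    ContinuousLinearMap.apply_apply]
  exact second_derivative_symmetric
    (fun y => ((hg.differentiable (by norm_num)) y).hasFDerivAt)
    (hdg p).hasFDerivAt (0, 1) (1, 0)

lemma Differentiable.divc {g : ℝ × ℝ → ℂ} (hg : Differentiable ℝ g) (c : ℂ) :
    Differentiable ℝ fun q => g q / c := by
  simpa only [div_eq_mul_inv] using hg.mul_const c⁻¹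

/-- If `A` is C³ and `f` is a nowhere-vanishing C³ simultaneous
solution of both Lax pair equations with spectral parameter `λ`, then `A`
satisfies the KdV equation `∂ₜA + ∂ₓ[(1/2)A² + ∂ₓ²A] = 0`. -/
theorem lax_pair_compatibility_implies_kdv
    (A : ℝ → ℝ → ℝ) (hA : ContDiff ℝ 3 (fun p : ℝ × ℝ => A p.1 p.2))
    (lam : ℂ) (f : ℝ → ℝ → ℂ)
    (hf : ContDiff ℝ 3 (fun p : ℝ × ℝ => f p.1 p.2))
    (hfne : ∀ x t : ℝ, f x t ≠ 0)
    (hLax1 : ∀ x t : ℝ,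
      deriv (deriv (fun y => f y t)) x =
        -(lam ^ 2 / 4) * f x t - (1 / 6) * (A x t : ℂ) * f x t)
    (hLax2 : ∀ x t : ℝ,
      deriv (fun τ => f x τ) t =
        (1 / 6) * (deriv (fun y => A y t) x : ℂ) * f x t +
          (lam ^ 2 - (A x t : ℂ) / 3) * deriv (fun y => f y t) x) :
    ∀ x t : ℝ,
      deriv (fun τ => A x τ) t +
        deriv (fun y => (1 / 2) * (A y t) ^ 2 +
          deriv (deriv (fun y' => A y' t)) y) x = 0 := by
  -- uncurried functions
  obtain ⟨Ar, hAr⟩ : ∃ g : ℝ × ℝ → ℝ, g = fun p : ℝ × ℝ => A p.1 p.2 := ⟨_, rfl⟩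
  obtain ⟨F, hF⟩ : ∃ g : ℝ × ℝ → ℂ, g = fun p : ℝ × ℝ => f p.1 p.2 := ⟨_, rfl⟩
  obtain ⟨Fx, hFx⟩ : ∃ g : ℝ × ℝ → ℂ, g = fun p => fderiv ℝ F p (1, 0) := ⟨_, rfl⟩
  obtain ⟨Fxx, hFxx⟩ : ∃ g : ℝ × ℝ → ℂ, g = fun p => fderiv ℝ Fx p (1, 0) := ⟨_, rfl⟩
  obtain ⟨Ft, hFt⟩ : ∃ g : ℝ × ℝ → ℂ, g = fun p => fderiv ℝ F p (0, 1) := ⟨_, rfl⟩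
  obtain ⟨a1, ha1⟩ : ∃ g : ℝ × ℝ → ℝ, g = fun p => fderiv ℝ Ar p (1, 0) := ⟨_, rfl⟩
  obtain ⟨a11, ha11⟩ : ∃ g : ℝ × ℝ → ℝ, g = fun p => fderiv ℝ a1 p (1, 0) := ⟨_, rfl⟩
  obtain ⟨a2, ha2⟩ : ∃ g : ℝ × ℝ → ℝ, g = fun p => fderiv ℝ Ar p (0, 1) := ⟨_, rfl⟩
  -- regularity
  have cAr : ContDiff ℝ 3 Ar := hAr ▸ hA
  have cF : ContDiff ℝ 3 F := hF ▸ hf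
  have cFx : ContDiff ℝ 2 Fx := hFx ▸ contDiff_pd F _ cF (by norm_num)
  have cFxx : ContDiff ℝ 1 Fxx := hFxx ▸ contDiff_pd Fx _ cFx (by norm_num)
  have cFt : ContDiff ℝ 2 Ft := hFt ▸ contDiff_pd F _ cF (by norm_num)
  have ca1 : ContDiff ℝ 2 a1 := ha1 ▸ contDiff_pd Ar _ cAr (by norm_num)
  have ca11 : ContDiff ℝ 1 a11 := ha11 ▸ contDiff_pd a1 _ ca1 (by norm_num)
  have ca2 : ContDiff ℝ 2 a2 := ha2 ▸ contDiff_pd Ar _ cAr (by norm_num)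
  have dF : Differentiable ℝ F := cF.differentiable (by norm_num)
  have dFx : Differentiable ℝ Fx := cFx.differentiable (by norm_num)
  have dFxx : Differentiable ℝ Fxx := cFxx.differentiable (by norm_num)
  have dAr : Differentiable ℝ Ar := cAr.differentiable (by norm_num)
  have da1 : Differentiable ℝ a1 := ca1.differentiable (by norm_num)
  have da11 : Differentiable ℝ a11 := ca11.differentiable (by norm_num)
  -- pointwise HasDerivAt facts for the atoms
  have hFl1 : ∀ x t : ℝ, HasDerivAt (fun y => F (y, t)) (Fx (x, t)) x := by
    intro x t; rw [hFx]; exact pd1 F (dF _)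
  have hFl2 : ∀ x t : ℝ, HasDerivAt (fun τ => F (x, τ)) (Ft (x, t)) t := by
    intro x t; rw [hFt]; exact pd2 F (dF _)
  have hFxl1 : ∀ x t : ℝ, HasDerivAt (fun y => Fx (y, t)) (Fxx (x, t)) x := by
    intro x t; rw [hFxx]; exact pd1 Fx (dFx _)
  have hAl1 : ∀ x t : ℝ, HasDerivAt (fun y => Ar (y, t)) (a1 (x, t)) x := by
    intro x t; rw [ha1]; exact pd1 Ar (dAr _)
  have hAl2 : ∀ x t : ℝ, HasDerivAt (fun τ => Ar (x, τ)) (a2 (x, t)) t := by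
    intro x t; rw [ha2]; exact pd2 Ar (dAr _)
  have ha1l1 : ∀ x t : ℝ, HasDerivAt (fun y => a1 (y, t)) (a11 (x, t)) x := by
    intro x t; rw [ha11]; exact pd1 a1 (da1 _)
  -- translation of the hypotheses
  have hT1 : ∀ x t : ℝ, Fxx (x, t) =
      -(lam ^ 2 / 4) * F (x, t) - (1 / 6) * (Ar (x, t) : ℂ) * F (x, t) := by
    intro x t
    have e2 := hLax1 x t
    have e1 : deriv (fun y => f y t) = fun y => Fx (y, t) := by
      funext y
      have : (fun y => f y t) = fun y => F (y, t) := by rw [hF]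
      rw [this]
      exact (hFl1 y t).deriv
    rw [e1, (hFxl1 x t).deriv] at e2
    rw [hAr, hF]
    exact e2
  have hT2 : ∀ x t : ℝ, Ft (x, t) =
      (1 / 6) * (a1 (x, t) : ℂ) * F (x, t) +
        (lam ^ 2 - (Ar (x, t) : ℂ) / 3) * Fx (x, t) := by
    intro x t
    have e2 := hLax2 x t
    have e0 : (fun τ => f x τ) = fun τ => F (x, τ) := by rw [hF]
    have e0' : (fun y => f y t) = fun y => F (y, t) := by rw [hF]
    have e0'' : (fun y => ((A y t : ℝ) : ℂ)) = fun y => ((Ar (y, t) : ℝ) : ℂ) := by rw [hAr]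
    rw [e0, (hFl2 x t).deriv, e0', (hFl1 x t).deriv, e0'', ((hAl1 x t).ofReal_comp).deriv] at e2
    rw [hAr, hF]
    exact e2
  -- the second-order x-derivative as a formula (functions)
  have hFxxG : Fxx = fun q => -(lam ^ 2 / 4) * F q - 1 / 6 * (Ar q : ℂ) * F q := by
    funext q; obtain ⟨x, t⟩ := q; exact hT1 x t
  have hFtH : Ft = fun q =>
      1 / 6 * (a1 q : ℂ) * F q + (lam ^ 2 - (Ar q : ℂ) / 3) * Fx q := by
    funext q; obtain ⟨x, t⟩ := q; exact hT2 x t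
  -- differentiability of assembled formulas
  have dArC : Differentiable ℝ fun q => ((Ar q : ℝ) : ℂ) :=
    Complex.ofRealCLM.differentiable.comp dAr
  have da1C : Differentiable ℝ fun q => ((a1 q : ℝ) : ℂ) :=
    Complex.ofRealCLM.differentiable.comp da1
  have da11C : Differentiable ℝ fun q => ((a11 q : ℝ) : ℂ) :=
    Complex.ofRealCLM.differentiable.comp da11
  have dG : Differentiable ℝ fun q : ℝ × ℝ =>
      -(lam ^ 2 / 4) * F q - 1 / 6 * (Ar q : ℂ) * F q :=
    (dF.const_mul (-(lam ^ 2 / 4))).sub ((dArC.const_mul (1 / 6 : ℂ)).mul dF)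
  have dH : Differentiable ℝ fun q : ℝ × ℝ =>
      1 / 6 * (a1 q : ℂ) * F q + (lam ^ 2 - (Ar q : ℂ) / 3) * Fx q :=
    ((da1C.const_mul (1 / 6 : ℂ)).mul dF).add
      (((differentiable_const (lam ^ 2)).sub (dArC.divc (3 : ℂ))).mul dFx)
  obtain ⟨K, hK⟩ : ∃ g : ℝ × ℝ → ℂ, g = fun q =>
      1 / 6 * ((a11 q : ℂ) * F q + (a1 q : ℂ) * Fx q) +
        ((0 - (a1 q : ℂ) / 3) * Fx q + (lam ^ 2 - (Ar q : ℂ) / 3) * Fxx q) := ⟨_, rfl⟩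
  have dK : Differentiable ℝ K := by
    rw [hK]
    exact ((((da11C.mul dF).add (da1C.mul dFx)).const_mul (1 / 6 : ℂ))).add
      ((((differentiable_const (0 : ℂ)).sub (da1C.divc (3 : ℂ))).mul dFx).add
        (((differentiable_const (lam ^ 2)).sub (dArC.divc (3 : ℂ))).mul dFxx))
  -- computation: x-derivative of the Ft formula is K
  have hC2 : ∀ x t : ℝ, fderiv ℝ (fun q =>
      1 / 6 * (a1 q : ℂ) * F q + (lam ^ 2 - (Ar q : ℂ) / 3) * Fx q) (x, t) (1, 0) =
      K (x, t) := by
    intro x t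
    have hline := ((((ha1l1 x t).ofReal_comp.const_mul ((1 : ℂ) / 6)).mul (hFl1 x t)).add
      (((hasDerivAt_const x (lam ^ 2)).sub
        (((hAl1 x t).ofReal_comp).div_const 3)).mul (hFxl1 x t)))
    have e := hline.unique (pd1 _ (dH (x, t)))
    rw [← e]
    simp only [hK, Pi.sub_apply]
    ring
  have w2b : (fun q => fderiv ℝ Fx q (0, 1)) = fun q => fderiv ℝ Ft q (1, 0) := by
    funext q
    have h := clairaut12 F (cF.of_le (by norm_num)) q
    rw [← hFx, ← hFt] at h
    exact h
  have w2c : (fun q => fderiv ℝ Ft q (1, 0)) = K := by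
    funext q; obtain ⟨y, s⟩ := q
    rw [hFtH]
    exact hC2 y s
  -- now fix the point
  intro x t
  have w2a := clairaut12 Fx cFx (x, t)
  have Tchain : fderiv ℝ (fun q => -(lam ^ 2 / 4) * F q - 1 / 6 * (Ar q : ℂ) * F q)
      (x, t) (0, 1) = fderiv ℝ (fun q =>
      1 / 6 * ((a11 q : ℂ) * F q + (a1 q : ℂ) * Fx q) +
        ((0 - (a1 q : ℂ) / 3) * Fx q + (lam ^ 2 - (Ar q : ℂ) / 3) * Fxx q)) (x, t) (1, 0) := by
    rw [← hFxxG]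
    conv_lhs => rw [hFxx]
    rw [w2a, w2b, w2c, hK]
  -- way 1 value
  have hline1 := ((hFl2 x t).const_mul (-(lam ^ 2 / 4))).sub
    ((((hAl2 x t).ofReal_comp).const_mul ((1 : ℂ) / 6)).mul (hFl2 x t))
  have e1 := hline1.unique (pd2 _ (dG (x, t)))
  -- way 2 value
  have hline3 := ((((pd1 a11 (da11 (x, t))).ofReal_comp.mul (hFl1 x t)).add
      (((ha1l1 x t).ofReal_comp).mul (hFxl1 x t))).const_mul ((1 : ℂ) / 6)).add
    ((((hasDerivAt_const x (0 : ℂ)).sub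
        (((ha1l1 x t).ofReal_comp).div_const 3)).mul (hFxl1 x t)).add
      (((hasDerivAt_const x (lam ^ 2)).sub
        (((hAl1 x t).ofReal_comp).div_const 3)).mul (pd1 Fxx (dFxx (x, t)))))
  have hpd3 : HasDerivAt (fun y => (fun q =>
      1 / 6 * ((a11 q : ℂ) * F q + (a1 q : ℂ) * Fx q) +
        ((0 - (a1 q : ℂ) / 3) * Fx q + (lam ^ 2 - (Ar q : ℂ) / 3) * Fxx q)) (y, t))
      (fderiv ℝ (fun q =>
      1 / 6 * ((a11 q : ℂ) * F q + (a1 q : ℂ) * Fx q) +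
        ((0 - (a1 q : ℂ) / 3) * Fx q + (lam ^ 2 - (Ar q : ℂ) / 3) * Fxx q)) (x, t) (1, 0)) x := by
    have h := pd1 K (dK (x, t))
    rw [hK] at h
    exact h
  have e3 := hline3.unique hpd3
  -- third x-derivative value
  have hline4 := ((hFl1 x t).const_mul (-(lam ^ 2 / 4))).sub
    ((((hAl1 x t).ofReal_comp).const_mul ((1 : ℂ) / 6)).mul (hFl1 x t))
  have e4' : fderiv ℝ (fun q => -(lam ^ 2 / 4) * F q - 1 / 6 * (Ar q : ℂ) * F q) (x, t) (1, 0)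
      = fderiv ℝ Fxx (x, t) (1, 0) := by rw [← hFxxG]
  have e4 := (hline4.unique (pd1 _ (dG (x, t)))).trans e4'
  -- assemble
  have Ebig := e1.trans (Tchain.trans e3.symm)
  rw [hT2] at Ebig
  rw [hT1] at Ebig
  rw [← e4] at Ebig
  have hFne : F (x, t) ≠ 0 := by rw [hF]; exact hfne x t
  simp only [Pi.sub_apply] at Ebig
  have keyC : ((a2 (x, t) : ℂ) + (Ar (x, t) : ℂ) * (a1 (x, t) : ℂ) +
      (fderiv ℝ a11 (x, t) (1, 0) : ℂ)) * F (x, t) = 0 := by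
    linear_combination (-6 : ℂ) * Ebig
  have keyR : a2 (x, t) + Ar (x, t) * a1 (x, t) + fderiv ℝ a11 (x, t) (1, 0) = 0 := by
    rcases mul_eq_zero.mp keyC with h | h
    · exact_mod_cast h
    · exact absurd h hFne
  -- translate the goal
  have g1 : deriv (fun τ => A x τ) t = a2 (x, t) := by
    have h : (fun τ => A x τ) = fun τ => Ar (x, τ) := by rw [hAr]
    rw [h]; exact (hAl2 x t).deriv
  have einner : (fun y => 1 / 2 * A y t ^ 2 + deriv (deriv fun y' => A y' t) y) =
      fun y => 1 / 2 * Ar (y, t) ^ 2 + a11 (y, t) := by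
    funext y
    have e : deriv (fun y' => A y' t) = fun y' => a1 (y', t) := by
      funext y'
      have h : (fun y' => A y' t) = fun y' => Ar (y', t) := by rw [hAr]
      rw [h]; exact (hAl1 y' t).deriv
    rw [e, (ha1l1 y t).deriv, hAr]
  have hinner := (((hAl1 x t).pow 2).const_mul ((1 : ℝ) / 2)).add (pd1 a11 (da11 (x, t)))
  have hinner' : HasDerivAt (fun y => 1 / 2 * Ar (y, t) ^ 2 + a11 (y, t)) _ x := hinner
  rw [g1, einner, hinner'.deriv]
  linear_combination keyR
end

section
/- Let N ≥ 2 be an integer and let η₁, ..., η_N be distinct positive real numbers. For k = 1, ..., N define D_k := ∏_{n≠k}(2iη_k − 2iη_n) · ∏_{n=1}^{N}(2iη_k + 2iη_n). Then for every odd integer p with 1 ≤ p ≤ 2N − 3, the sum I_p := Σ_{k=1}^{N} (2iη_k)^p / D_k equals 0. -/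
open Complex Finset

open Polynomial in
lemma aux_sum_pow_mul_weight {F : Type*} [Field F] {ι : Type*} [DecidableEq ι]
    (s : Finset ι) (v : ι → F) (hvs : Set.InjOn v s) (m : ℕ) (hm : m + 1 < s.card) :
    ∑ i ∈ s, v i ^ m * ∏ j ∈ s.erase i, (v i - v j)⁻¹ = 0 := by
  have hdeg : ((X : F[X]) ^ m).degree < s.card := by
    rw [degree_X_pow]
    exact_mod_cast lt_of_le_of_lt (Nat.le_succ m) hm
  have hX : (X ^ m : F[X]) = Lagrange.interpolate s v fun i => v i ^ m :=
    Lagrange.eq_interpolate_of_eval_eq (fun i => v i ^ m) hvs hdeg (fun i _ => by simp)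
  have hb : ∀ i ∈ s, (Lagrange.basis s v i).coeff (s.card - 1)
      = ∏ j ∈ s.erase i, (v i - v j)⁻¹ := by
    intro i hi
    simp only [Lagrange.basis, Lagrange.basisDivisor]
    rw [Finset.prod_mul_distrib, ← map_prod, ← Lagrange.nodal_eq, coeff_C_mul]
    have hcard : (s.erase i).card = s.card - 1 := Finset.card_erase_of_mem hi
    have hn : (Lagrange.nodal (s.erase i) v).coeff (s.card - 1) = 1 := by
      rw [← hcard, ← Lagrange.natDegree_nodal (s := s.erase i) (v := v)]
      exact Lagrange.nodal_monic.coeff_natDegree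
    rw [hn, mul_one]
  have hc := congrArg (fun f : F[X] => f.coeff (s.card - 1)) hX
  simp only [Lagrange.interpolate_apply, finset_sum_coeff, coeff_C_mul] at hc
  have h0 : ((X : F[X]) ^ m).coeff (s.card - 1) = 0 := by
    rw [coeff_X_pow, if_neg]
    omega
  rw [h0] at hc
  have hs : ∑ i ∈ s, v i ^ m * ∏ j ∈ s.erase i, (v i - v j)⁻¹
      = ∑ i ∈ s, v i ^ m * (Lagrange.basis s v i).coeff (s.card - 1) :=
    Finset.sum_congr rfl fun i hi => by rw [hb i hi]
  rw [hs]
  exact hc.symm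

/-- For distinct positive `η₁, ..., η_N` (`N ≥ 2`) and
`D_k = ∏_{n≠k}(2iη_k − 2iη_n)·∏_{n=1}^N(2iη_k + 2iη_n)`, the sum
`I_p = Σ_k (2iη_k)^p / D_k` vanishes for every odd `p` with `1 ≤ p ≤ 2N−3`. -/
theorem residue_sum_vanishes_odd_powers
    (N : ℕ) (hN : 2 ≤ N) (η : Fin N → ℝ)
    (hpos : ∀ k, 0 < η k) (hdist : Function.Injective η)
    (D : Fin N → ℂ)
    (hD : ∀ k, D k =
      (∏ n ∈ Finset.univ.erase k,
          (2 * Complex.I * (η k : ℂ) - 2 * Complex.I * (η n : ℂ))) *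
        ∏ n : Fin N, (2 * Complex.I * (η k : ℂ) + 2 * Complex.I * (η n : ℂ)))
    (p : ℕ) (hodd : Odd p) (hp1 : 1 ≤ p) (hp2 : p ≤ 2 * N - 3) :
    ∑ k : Fin N, (2 * Complex.I * (η k : ℂ)) ^ p / D k = 0 := by
  obtain ⟨m, hpm⟩ := hodd
  set x : Fin N → ℂ := fun k => 2 * Complex.I * (η k : ℂ) with hx
  set z : Fin N → ℂ := fun k => x k ^ 2 with hz
  have hxne : ∀ k, x k ≠ 0 := by
    intro k
    simp only [hx, mul_ne_zero_iff]
    refine ⟨⟨two_ne_zero, Complex.I_ne_zero⟩, ?_⟩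
    exact_mod_cast (hpos k).ne'
  have hzinj : Function.Injective z := by
    intro a b hab
    simp only [hz, hx] at hab
    have hc : ((η a : ℂ)) ^ 2 = ((η b : ℂ)) ^ 2 := by
      linear_combination (-(1:ℂ)/4) * hab + ((η a : ℂ) ^ 2 - (η b : ℂ) ^ 2) * Complex.I_sq
    have hr : (η a) ^ 2 = (η b) ^ 2 := by exact_mod_cast hc
    have h1 := hpos a
    have h2 := hpos b
    exact hdist (le_antisymm (by nlinarith) (by nlinarith))
  have hzne : ∀ k, ∀ n ∈ (univ : Finset (Fin N)).erase k, z k - z n ≠ 0 := by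
    intro k n hn
    have hnk : n ≠ k := (Finset.mem_erase.mp hn).1
    exact sub_ne_zero_of_ne fun h => hnk (hzinj h).symm
  have hDk : ∀ k, D k = 2 * x k * ∏ n ∈ (univ : Finset (Fin N)).erase k, (z k - z n) := by
    intro k
    rw [hD k, ← Finset.mul_prod_erase univ (fun n => x k + x n) (Finset.mem_univ k)]
    have : ∏ n ∈ (univ : Finset (Fin N)).erase k, (z k - z n)
        = ∏ n ∈ (univ : Finset (Fin N)).erase k, ((x k - x n) * (x k + x n)) := by
      refine Finset.prod_congr rfl fun n _ => ?_
      simp only [hz]; ring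
    rw [this, Finset.prod_mul_distrib]
    ring
  have hterm : ∀ k, x k ^ p / D k
      = (1 / 2) * (z k ^ m * ∏ n ∈ (univ : Finset (Fin N)).erase k, (z k - z n)⁻¹) := by
    intro k
    have hP : (∏ n ∈ (univ : Finset (Fin N)).erase k, (z k - z n)) ≠ 0 :=
      Finset.prod_ne_zero_iff.mpr (hzne k)
    have hxp : x k ^ p = z k ^ m * x k := by
      have hzk : z k = x k ^ 2 := rfl
      rw [hpm, hzk, ← pow_mul, ← pow_succ]
    rw [hDk k, hxp, Finset.prod_inv_distrib]
    have key : ∀ a b P : ℂ, b ≠ 0 → P ≠ 0 → a * b / (2 * b * P) = 1 / 2 * (a * P⁻¹) := by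
      intro a b P hb hP
      field_simp
    exact key _ _ _ (hxne k) hP
  calc ∑ k : Fin N, x k ^ p / D k
      = (1 / 2) * ∑ k : Fin N, z k ^ m * ∏ n ∈ (univ : Finset (Fin N)).erase k, (z k - z n)⁻¹ := by
        rw [Finset.mul_sum]
        exact Finset.sum_congr rfl fun k _ => hterm k
    _ = 0 := by
        rw [aux_sum_pow_mul_weight univ z hzinj.injOn m (by
          simp only [Finset.card_univ, Fintype.card_fin]; omega), mul_zero]
end

section
/- Let N ≥ 1 be an integer and let η₁, ..., η_N be distinct positive real numbers. For k = 1, ..., N define D_k := ∏_{n≠k}(2iη_k − 2iη_n) · ∏_{n=1}^{N}(2iη_k + 2iη_n). Then 1/∏_{n=1}^{N}(4η_n²) + 2·Σ_{k=1}^{N} 1/(2iη_k·D_k) = 0. -/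
open Complex Finset

lemma sum_inv_prod_sub_eq_zero {F : Type*} [Field F] {ι : Type*} [DecidableEq ι]
    (s : Finset ι) (v : ι → F) (hvs : Set.InjOn v s) (hs : 2 ≤ s.card) :
    ∑ i ∈ s, ∏ j ∈ s.erase i, (v i - v j)⁻¹ = 0 := by
  have hne : s.Nonempty := Finset.card_pos.mp (by omega)
  have h := Lagrange.sum_basis hvs hne
  have h2 := congrArg (fun p => Polynomial.coeff p (s.card - 1)) h
  simp only [Polynomial.finset_sum_coeff, Polynomial.coeff_one] at h2
  rw [if_neg (by omega : ¬ s.card - 1 = 0)] at h2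
  rw [← h2]
  refine Finset.sum_congr rfl fun i hi => ?_
  have hbasis : Lagrange.basis s v i =
      Polynomial.C (∏ j ∈ s.erase i, (v i - v j)⁻¹) *
        ∏ j ∈ s.erase i, (Polynomial.X - Polynomial.C (v j)) := by
    rw [Lagrange.basis, map_prod, ← Finset.prod_mul_distrib]
    rfl
  rw [hbasis, Polynomial.coeff_C_mul]
  have hm : (∏ j ∈ s.erase i, (Polynomial.X - Polynomial.C (v j))).Monic :=
    Polynomial.monic_prod_of_monic _ _ fun j _ => Polynomial.monic_X_sub_C _
  have hdeg : (∏ j ∈ s.erase i, (Polynomial.X - Polynomial.C (v j))).natDegree = s.card - 1 := by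
    rw [Polynomial.natDegree_prod_of_monic _ _ fun j _ => Polynomial.monic_X_sub_C _]
    simp [Finset.card_erase_of_mem hi]
  rw [← hdeg, hm.coeff_natDegree, mul_one]

lemma prod_neg_aux {ι : Type*} (s : Finset ι) (g : ι → ℂ) :
    ∏ i ∈ s, -g i = (-1) ^ s.card * ∏ i ∈ s, g i := by
  classical
  induction s using Finset.induction with
  | empty => simp
  | insert a s h ih =>
    rw [Finset.prod_insert h, Finset.prod_insert h, ih,
      Finset.card_insert_of_notMem h, pow_succ]
    ring

/-- For distinct positive `η₁, ..., η_N` (`N ≥ 1`) and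
`D_k = ∏_{n≠k}(2iη_k − 2iη_n)·∏_{n=1}^N(2iη_k + 2iη_n)`, one has
`1/∏_n(4η_n²) + 2·Σ_k 1/(2iη_k·D_k) = 0`. -/
theorem residue_sum_identity_at_zero
    (N : ℕ) (hN : 1 ≤ N) (η : Fin N → ℝ)
    (hpos : ∀ k, 0 < η k) (hdist : Function.Injective η)
    (D : Fin N → ℂ)
    (hD : ∀ k, D k =
      (∏ n ∈ Finset.univ.erase k,
          (2 * Complex.I * (η k : ℂ) - 2 * Complex.I * (η n : ℂ))) *
        ∏ n : Fin N, (2 * Complex.I * (η k : ℂ) + 2 * Complex.I * (η n : ℂ)))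
    :
    (1 : ℂ) / (∏ n : Fin N, (4 * (η n : ℂ) ^ 2)) +
      2 * ∑ k : Fin N, 1 / (2 * Complex.I * (η k : ℂ) * D k) = 0 := by
  classical
  set f : Fin N → ℂ := fun k => 2 * Complex.I * (η k : ℂ) with hf
  have hηne : ∀ k, (η k : ℂ) ≠ 0 := fun k => by
    exact_mod_cast (hpos k).ne'
  have hfne : ∀ k, f k ≠ 0 := fun k => by
    simp [hf, Complex.I_ne_zero, hηne k]
  have hfadd : ∀ k n, f k + f n ≠ 0 := by
    intro k n h
    have h2 : (2 : ℂ) * Complex.I * ((η k : ℂ) + (η n : ℂ)) = 0 := by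
      rw [mul_add]; exact h
    have h3 : ((η k : ℂ) + (η n : ℂ)) = 0 := by
      rcases mul_eq_zero.mp h2 with h4 | h4
      · exact absurd h4 (by simp [Complex.I_ne_zero])
      · exact h4
    have h5 : (η k : ℝ) + η n = 0 := by exact_mod_cast h3
    linarith [hpos k, hpos n]
  have hfinj : Function.Injective f := by
    intro k n h
    have : (η k : ℂ) = (η n : ℂ) :=
      mul_left_cancel₀ (by simp [Complex.I_ne_zero] : (2 : ℂ) * Complex.I ≠ 0) h
    exact hdist (by exact_mod_cast this)
  set A : Finset ℂ := Finset.image f Finset.univ with hA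
  set B : Finset ℂ := Finset.image (fun k => -f k) Finset.univ with hB
  have hginj : Function.Injective (fun k => -f k) := fun k n h =>
    hfinj (neg_injective h)
  have h0A : (0 : ℂ) ∉ A := by
    intro h
    obtain ⟨k, _, hk⟩ := Finset.mem_image.mp h
    exact hfne k hk
  have h0B : (0 : ℂ) ∉ B := by
    intro h
    obtain ⟨k, _, hk⟩ := Finset.mem_image.mp h
    exact hfne k (neg_eq_zero.mp hk)
  have hdisj : Disjoint A B := by
    rw [Finset.disjoint_left]
    intro x hx hx'
    simp only [hA, hB, Finset.mem_image] at hx hx'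
    obtain ⟨k, _, hk⟩ := hx
    obtain ⟨n, _, hn⟩ := hx'
    exact hfadd k n (by rw [← hk] at hn; linear_combination hk - hn - hk)
  have h0AB : (0 : ℂ) ∉ A ∪ B := by simp [h0A, h0B]
  set s : Finset ℂ := insert 0 (A ∪ B) with hs
  have hcard : 2 ≤ s.card := by
    have hAcard : A.card = N := by
      rw [hA, Finset.card_image_of_injective _ hfinj, Finset.card_univ, Fintype.card_fin]
    have : A.card ≤ (A ∪ B).card := Finset.card_le_card Finset.subset_union_left
    rw [hs, Finset.card_insert_of_notMem h0AB]
    omega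
  have key := sum_inv_prod_sub_eq_zero s id Function.injective_id.injOn hcard
  simp only [id_eq] at key
  -- memberships
  have hfA : ∀ k, f k ∈ A := fun k => Finset.mem_image_of_mem f (Finset.mem_univ k)
  have hgB : ∀ k, -f k ∈ B := fun k =>
    Finset.mem_image_of_mem (fun k => -f k) (Finset.mem_univ k)
  have hfB : ∀ k, f k ∉ B := by
    intro k hk
    simp only [hB, Finset.mem_image] at hk
    obtain ⟨n, _, hn⟩ := hk
    exact hfadd k n (by linear_combination -hn)
  have hgA : ∀ k, -f k ∉ A := by
    intro k hk
    simp only [hA, Finset.mem_image] at hk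
    obtain ⟨n, _, hn⟩ := hk
    exact hfadd n k (by linear_combination hn)
  -- split the sum
  rw [hs, Finset.sum_insert h0AB, Finset.sum_union hdisj, hA, hB,
    Finset.sum_image (fun k _ n _ h => hfinj h),
    Finset.sum_image (fun k _ n _ h => hginj h)] at key
  -- term at 0
  have E0 : ∏ y ∈ (insert (0:ℂ) (A ∪ B)).erase 0, ((0:ℂ) - y)⁻¹
      = (∏ n : Fin N, (4 * (η n : ℂ) ^ 2))⁻¹ := by
    rw [Finset.erase_insert h0AB, Finset.prod_union hdisj, hA, hB,
      Finset.prod_image (fun k _ n _ h => hfinj h),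
      Finset.prod_image (fun k _ n _ h => hginj h),
      ← Finset.prod_mul_distrib, ← Finset.prod_inv_distrib]
    refine Finset.prod_congr rfl fun k _ => ?_
    rw [← mul_inv]
    congr 1
    simp only [hf]
    ring_nf
    rw [Complex.I_sq]
    ring
  -- erase computations
  have herasef : ∀ k, (insert (0:ℂ) (A ∪ B)).erase (f k)
      = insert 0 ((Finset.image f (Finset.univ.erase k)) ∪ B) := by
    intro k
    rw [Finset.erase_insert_of_ne (Ne.symm (hfne k)), Finset.erase_union_distrib,
      Finset.erase_eq_of_notMem (hfB k), ← Finset.image_erase hfinj]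
  have heraseg : ∀ k, (insert (0:ℂ) (A ∪ B)).erase (-f k)
      = insert 0 (A ∪ (Finset.image (fun n => -f n) (Finset.univ.erase k))) := by
    intro k
    rw [Finset.erase_insert_of_ne (Ne.symm (neg_ne_zero.mpr (hfne k))), Finset.erase_union_distrib,
      Finset.erase_eq_of_notMem (hgA k), ← Finset.image_erase hginj]
  -- term at f k
  have Ef : ∀ k, ∏ y ∈ (insert (0:ℂ) (A ∪ B)).erase (f k), (f k - y)⁻¹
      = (2 * Complex.I * (η k : ℂ) * D k)⁻¹ := by
    intro k
    have h0' : (0:ℂ) ∉ (Finset.image f (Finset.univ.erase k)) ∪ B := by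
      intro h
      rcases Finset.mem_union.mp h with h | h
      · obtain ⟨n, _, hn⟩ := Finset.mem_image.mp h
        exact hfne n hn
      · exact h0B h
    have hdisj' : Disjoint (Finset.image f (Finset.univ.erase k)) B :=
      hdisj.mono_left (by rw [hA]; exact Finset.image_subset_image (Finset.subset_univ _))
    rw [herasef k, Finset.prod_insert h0', Finset.prod_union hdisj', hB,
      Finset.prod_image (fun a _ b _ h => hfinj h),
      Finset.prod_image (fun a _ b _ h => hginj h)]
    rw [hD k]
    simp only [sub_zero, sub_neg_eq_add, hf, mul_inv, Finset.prod_inv_distrib]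
  -- term at -f k
  have Eg : ∀ k, ∏ y ∈ (insert (0:ℂ) (A ∪ B)).erase (-f k), (-f k - y)⁻¹
      = (2 * Complex.I * (η k : ℂ) * D k)⁻¹ := by
    intro k
    have h0' : (0:ℂ) ∉ A ∪ (Finset.image (fun n => -f n) (Finset.univ.erase k)) := by
      intro h
      rcases Finset.mem_union.mp h with h | h
      · exact h0A h
      · obtain ⟨n, _, hn⟩ := Finset.mem_image.mp h
        exact hfne n (neg_eq_zero.mp hn)
    have hdisj' : Disjoint A (Finset.image (fun n => -f n) (Finset.univ.erase k)) :=
      hdisj.mono_right (by rw [hB]; exact Finset.image_subset_image (Finset.subset_univ _))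
    rw [heraseg k, Finset.prod_insert h0', Finset.prod_union hdisj', hA,
      Finset.prod_image (fun a _ b _ h => hfinj h),
      Finset.prod_image (fun a _ b _ h => hginj h)]
    have e1 : ∀ n : Fin N, (-f k - f n)⁻¹ = -(f k + f n)⁻¹ := by
      intro n; rw [← inv_neg]; ring_nf
    have e2 : ∀ n : Fin N, (-f k - -f n)⁻¹ = -(f k - f n)⁻¹ := by
      intro n; rw [← inv_neg]; ring_nf
    simp only [sub_zero, e1, e2]
    rw [prod_neg_aux, prod_neg_aux, Finset.card_univ, Fintype.card_fin,
      Finset.card_erase_of_mem (Finset.mem_univ k), Finset.card_univ, Fintype.card_fin]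
    have hsq : (-1 : ℂ) ^ (N - 1) * (-1 : ℂ) ^ (N - 1) = 1 := by
      rw [← pow_add]; exact Even.neg_one_pow ⟨N - 1, rfl⟩
    have hpow : (-1 : ℂ) ^ N = (-1 : ℂ) ^ (N - 1) * (-1) := by
      rw [← pow_succ]; congr 1; omega
    rw [hpow, inv_neg, hD k]
    simp only [hf, mul_inv, Finset.prod_inv_distrib]
    linear_combination ((2 * Complex.I * (η k : ℂ))⁻¹ *
      (∏ n : Fin N, (2 * Complex.I * (η k : ℂ) + 2 * Complex.I * (η n : ℂ)))⁻¹ *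
      (∏ n ∈ Finset.univ.erase k, (2 * Complex.I * (η k : ℂ) - 2 * Complex.I * (η n : ℂ)))⁻¹) * hsq
  simp only [hA, hB] at E0 Ef Eg
  rw [E0] at key
  simp only [Ef, Eg] at key
  simp only [one_div]
  linear_combination key
end

section
/- Assume the Kay–Moses setup: N ≥ 1, η₁ > ... > η_N > 0, α₁, ..., α_N ∈ ℝ, t ∈ ℝ fixed, and C¹ functions f₀, ..., f_{N−1} : ℝ → ℂ such that f₊(x,λ) := (1 + Σ_{n=0}^{N−1} λ^{n−N} f_n(x))·exp(−(i/2)(λx + λ³t)) satisfies f₊(x, 2iη_n) = (−1)^{n+1}·exp(2η_nα_n)·f₊(x, −2iη_n) for all x ∈ ℝ and n = 1, ..., N. Set f₋(x,λ) := f₊(x,−λ), g_±(x,λ) := f_±(x,λ)·exp((i/2)(λx + λ³t)), h₋(x,λ) := ∂_x g₋(x,λ), and define Y(x,z,λ) := g₊(z,λ)·exp(−i(λz + λ³t))·h₋(x,λ) / (λ^{1−2N}·∏_{n=1}^{N}(λ² + 4η_n²)). Then for all x, w ∈ ℝ and all R > 2η₁, the contour integral of λ ↦ Y(x,w,λ)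 over the positively oriented circle |λ| = R vanishes: ∮_{|λ|=R} Y(x,w,λ) dλ = 0. -/
open Complex Finset

lemma km_leadingCoeff_basis (s : Finset ℂ) (μ : ℂ) (hμ : μ ∈ s) :
    (Lagrange.basis s id μ).coeff (s.card - 1) = (∏ ν ∈ s.erase μ, (μ - ν))⁻¹ := by
  have hinj : Set.InjOn id (s : Set ℂ) := Function.injective_id.injOn
  have h1 : (Lagrange.basis s id μ).natDegree = s.card - 1 :=
    Lagrange.natDegree_basis hinj hμ
  rw [← h1, Polynomial.coeff_natDegree]
  unfold Lagrange.basis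
  rw [Polynomial.leadingCoeff_prod, ← Finset.prod_inv_distrib]
  refine Finset.prod_congr rfl fun ν hν => ?_
  have hne : (μ : ℂ) ≠ ν := by
    rcases Finset.mem_erase.mp hν with ⟨h2, _⟩
    exact fun h => h2 (by simp [h])
  rw [Lagrange.basisDivisor, Polynomial.leadingCoeff_mul, Polynomial.leadingCoeff_C,
    (Polynomial.monic_X_sub_C _).leadingCoeff, mul_one]
  rfl

/-- Lagrange identity: sum of p(μ)/∏(μ-ν) vanishes for deg p < card s - 1 -/
lemma km_lagrange_sum_zero (s : Finset ℂ) (p : Polynomial ℂ)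
    (hp : p.degree < ((s.card - 1 : ℕ) : WithBot ℕ)) :
    ∑ μ ∈ s, p.eval μ * (∏ ν ∈ s.erase μ, (μ - ν))⁻¹ = 0 := by
  have hinj : Set.InjOn id (s : Set ℂ) := Function.injective_id.injOn
  have hlt : p.degree < (s.card : WithBot ℕ) :=
    lt_of_lt_of_le hp (by exact_mod_cast Nat.sub_le _ _)
  have hint := Lagrange.eq_interpolate (v := id) (s := s) hinj hlt
  have hcoeff : p.coeff (s.card - 1) = 0 := Polynomial.coeff_eq_zero_of_degree_lt hp
  rw [hint] at hcoeff
  rw [Lagrange.interpolate_apply] at hcoeff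
  rw [Polynomial.finset_sum_coeff] at hcoeff
  rw [← hcoeff]
  refine Finset.sum_congr rfl fun μ hμ => ?_
  rw [Polynomial.coeff_C_mul, km_leadingCoeff_basis s μ hμ]
  simp

/-- partial fractions -/
lemma km_partial_fractions (s : Finset ℂ) (hs : s.Nonempty) (z : ℂ)
    (hz : ∀ μ ∈ s, z ≠ μ) :
    (∏ μ ∈ s, (z - μ))⁻¹ =
      ∑ μ ∈ s, (∏ ν ∈ s.erase μ, (μ - ν))⁻¹ * (z - μ)⁻¹ := by
  have hinj : Set.InjOn id (s : Set ℂ) := Function.injective_id.injOn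
  have hb := Lagrange.sum_basis hinj hs
  have he : (1 : ℂ) = ∑ μ ∈ s, ∏ ν ∈ s.erase μ, ((μ - ν)⁻¹ * (z - ν)) := by
    have := congrArg (Polynomial.eval z) hb
    rw [Polynomial.eval_finset_sum] at this
    rw [Polynomial.eval_one] at this
    rw [← this]
    refine Finset.sum_congr rfl fun μ hμ => ?_
    unfold Lagrange.basis
    rw [Polynomial.eval_prod]
    refine Finset.prod_congr rfl fun ν hν => ?_
    rw [Lagrange.basisDivisor]
    simp [mul_comm]
  have hzs : ∀ μ ∈ s, z - μ ≠ 0 := fun μ hμ => sub_ne_zero.mpr (hz μ hμ)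
  have hne : ∏ μ ∈ s, (z - μ) ≠ 0 := Finset.prod_ne_zero_iff.mpr hzs
  calc (∏ μ ∈ s, (z - μ))⁻¹ = (∑ μ ∈ s, ∏ ν ∈ s.erase μ, ((μ - ν)⁻¹ * (z - ν))) *
        (∏ μ ∈ s, (z - μ))⁻¹ := by rw [← he, one_mul]
    _ = ∑ μ ∈ s, (∏ ν ∈ s.erase μ, (μ - ν))⁻¹ * (z - μ)⁻¹ := by
        rw [Finset.sum_mul]
        refine Finset.sum_congr rfl fun μ hμ => ?_
        rw [Finset.prod_mul_distrib, ← Finset.prod_inv_distrib,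
          ← Finset.mul_prod_erase s _ hμ]
        have h1 : ∏ ν ∈ s.erase μ, (z - ν) ≠ 0 :=
          Finset.prod_ne_zero_iff.mpr fun ν hν => hzs ν (Finset.mem_of_mem_erase hν)
        have h2 : ∏ ν ∈ s.erase μ, (μ - ν) ≠ 0 := by
          refine Finset.prod_ne_zero_iff.mpr fun ν hν => sub_ne_zero.mpr ?_
          exact fun h => (Finset.mem_erase.mp hν).1 h.symm
        have h3 : z - μ ≠ 0 := hzs μ hμ
        field_simp
        simp only [one_div, Finset.prod_inv_distrib]
        field_simp

open Metric in

/-- Cauchy formula for one partial-fraction term -/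
lemma km_cauchy_term {R : ℝ} (hR : 0 < R) (G : ℂ → ℂ) (hG : Differentiable ℂ G)
    (μ : ℂ) (hμ : ‖μ‖ < R) :
    (∮ z in C(0, R), (z - μ)⁻¹ * G z) = 2 * Real.pi * I * G μ := by
  have hmem : μ ∈ ball (0 : ℂ) R := by simpa [mem_ball_zero_iff] using hμ
  have hc : DiffContOnCl ℂ G (ball (0 : ℂ) R) :=
    hG.diffContOnCl
  have := hc.circleIntegral_sub_inv_smul hmem
  simpa [smul_eq_mul, mul_assoc] using this

/-- pull a finite sum of scaled Cauchy kernels out of a circle integral -/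
lemma km_circle_sum {R : ℝ} (hR : 0 < R) (s : Finset ℂ) (c : ℂ → ℂ) (G : ℂ → ℂ)
    (hG : Continuous G) (hs : ∀ μ ∈ s, ‖μ‖ < R) :
    (∮ z in C(0, R), ∑ μ ∈ s, c μ * ((z - μ)⁻¹ * G z)) =
      ∑ μ ∈ s, c μ * ∮ z in C(0, R), (z - μ)⁻¹ * G z := by
  have hcm : ∀ μ ∈ s, ∀ θ : ℝ, circleMap 0 R θ - μ ≠ 0 := by
    intro μ hμ θ
    have h1 : ‖circleMap 0 R θ‖ = R := by
      simp [norm_circleMap_zero, abs_of_pos hR]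
    intro h
    rw [sub_eq_zero] at h
    rw [h] at h1
    exact absurd h1 (ne_of_lt (hs μ hμ))
  have hcont : ∀ μ ∈ s, Continuous (fun θ : ℝ =>
      c μ * (deriv (circleMap 0 R) θ • ((circleMap 0 R θ - μ)⁻¹ * G (circleMap 0 R θ)))) := by
    intro μ hμ
    simp only [deriv_circleMap, smul_eq_mul]
    fun_prop (disch := exact fun θ => hcm μ hμ θ)
  simp only [circleIntegral]
  have key : ∀ θ : ℝ, deriv (circleMap 0 R) θ •
      ∑ μ ∈ s, c μ * ((circleMap 0 R θ - μ)⁻¹ * G (circleMap 0 R θ)) =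
      ∑ μ ∈ s, c μ * (deriv (circleMap 0 R) θ •
        ((circleMap 0 R θ - μ)⁻¹ * G (circleMap 0 R θ))) := by
    intro θ
    rw [smul_eq_mul, Finset.mul_sum]
    exact Finset.sum_congr rfl fun μ _ => by rw [smul_eq_mul]; ring
  simp only [key]
  rw [intervalIntegral.integral_finset_sum
    (fun μ hμ => ((hcont μ hμ).intervalIntegrable _ _))]
  exact Finset.sum_congr rfl fun μ hμ => intervalIntegral.integral_const_mul _ _

noncomputable def kmSb {N : ℕ} (b : Fin N → ℂ) (z : ℂ) : ℂ := ∑ n : Fin N, z ^ (n : ℕ) * b n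

noncomputable def kmAA {N : ℕ} (f : Fin N → ℝ → ℂ) (y : ℝ) (z : ℂ) : ℂ :=
  z ^ N + kmSb (fun n => f n y) z

lemma kmAA_hasDerivAt {N : ℕ} (f : Fin N → ℝ → ℂ) (hf : ∀ n, Differentiable ℝ (f n))
    (z : ℂ) (x : ℝ) :
    HasDerivAt (fun y => kmAA f y z) (kmSb (fun n => deriv (f n) x) z) x := by
  unfold kmAA kmSb
  refine HasDerivAt.const_add _ ?_
  exact HasDerivAt.fun_sum fun n _ => ((hf n x).hasDerivAt.const_mul (z ^ (n : ℕ)))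

lemma km_hasDerivAt_exp (m e : ℂ) (x : ℝ) :
    HasDerivAt (fun y : ℝ => Complex.exp (m * (y : ℂ) + e))
      (m * Complex.exp (m * (x : ℂ) + e)) x := by
  have h0 : HasDerivAt (fun y : ℝ => (y : ℂ)) 1 x := by
    simpa using (hasDerivAt_id x).ofReal_comp
  have h1 : HasDerivAt (fun y : ℝ => m * (y : ℂ) + e) m x := by
    simpa using (h0.const_mul m).add_const e
  simpa [mul_comm] using h1.cexp

lemma kmAA_exp_hasDerivAt {N : ℕ} (f : Fin N → ℝ → ℂ) (hf : ∀ n, Differentiable ℝ (f n))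
    (z m e : ℂ) (x : ℝ) :
    HasDerivAt (fun y : ℝ => kmAA f y z * Complex.exp (m * (y : ℂ) + e))
      ((kmSb (fun n => deriv (f n) x) z + kmAA f x z * m) *
        Complex.exp (m * (x : ℂ) + e)) x := by
  have := (kmAA_hasDerivAt f hf z x).mul (km_hasDerivAt_exp m e x)
  exact this.congr_deriv (by ring)

/-- In the Kay–Moses setup, the meromorphic integrand
`Y(x,w,λ)` has vanishing contour integral over any circle `|λ| = R` with
`R > 2η₁` (i.e. the sum of all its residues is zero). -/
theorem kay_moses_Y_circle_integral_vanishes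
    (N : ℕ) (hN : 0 < N) (η : Fin N → ℝ) (α : Fin N → ℝ) (t : ℝ)
    (hpos : ∀ n, 0 < η n)
    (hdec : ∀ m n : Fin N, m < n → η n < η m)
    (f : Fin N → ℝ → ℂ) (hf : ∀ n, ContDiff ℝ 1 (f n))
    (fplus : ℝ → ℂ → ℂ)
    (hfplus : ∀ (x : ℝ) (lam : ℂ), fplus x lam =
      (1 + ∑ n : Fin N, lam ^ (((n : ℕ) : ℤ) - (N : ℤ)) * f n x) *
        Complex.exp (-(Complex.I / 2) * (lam * (x : ℂ) + lam ^ 3 * (t : ℂ))))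
    (hrel : ∀ (x : ℝ) (n : Fin N),
      fplus x (2 * Complex.I * (η n : ℂ)) =
        (-1 : ℂ) ^ (n : ℕ) * (Real.exp (2 * η n * α n) : ℂ) *
          fplus x (-(2 * Complex.I * (η n : ℂ))))
    (gplus gminus : ℝ → ℂ → ℂ)
    (hgplus : ∀ (x : ℝ) (lam : ℂ), gplus x lam =
      fplus x lam * Complex.exp ((Complex.I / 2) * (lam * (x : ℂ) + lam ^ 3 * (t : ℂ))))
    (hgminus : ∀ (x : ℝ) (lam : ℂ), gminus x lam =
      fplus x (-lam) * Complex.exp ((Complex.I / 2) * (lam * (x : ℂ) + lam ^ 3 * (t : ℂ))))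
    (hminus : ℝ → ℂ → ℂ)
    (hhminus : ∀ (x : ℝ) (lam : ℂ), hminus x lam = deriv (fun y => gminus y lam) x)
    (Y : ℝ → ℝ → ℂ → ℂ)
    (hY : ∀ (x z : ℝ) (lam : ℂ), Y x z lam =
      gplus z lam * Complex.exp (-Complex.I * (lam * (z : ℂ) + lam ^ 3 * (t : ℂ))) *
        hminus x lam /
        (lam ^ (1 - 2 * (N : ℤ)) * ∏ n : Fin N, (lam ^ 2 + 4 * (η n : ℂ) ^ 2)))
    (x w : ℝ) (R : ℝ) (hR : 2 * η ⟨0, hN⟩ < R) :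
    (∮ lam in C(0, R), Y x w lam) = 0 := by
  classical
  have hη0 : 0 < η ⟨0, hN⟩ := hpos _
  have hR0 : 0 < R := by linarith
  have hle : ∀ n, η n ≤ η ⟨0, hN⟩ := by
    intro n
    have h0n : (⟨0, hN⟩ : Fin N) ≤ n := by rw [Fin.le_def]; exact Nat.zero_le _
    rcases eq_or_lt_of_le h0n with h | h
    · rw [← h]
    · exact le_of_lt (hdec _ _ h)
  have hdf : ∀ n, Differentiable ℝ (f n) := fun n => (hf n).differentiable one_ne_zero
  -- root data
  set μf : Fin N → ℂ := fun n => 2 * I * (η n : ℂ) with hμf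
  have hμ0 : ∀ n, μf n ≠ 0 := by
    intro n
    simp only [hμf, mul_ne_zero_iff]
    exact ⟨⟨two_ne_zero, I_ne_zero⟩, ofReal_ne_zero.mpr (ne_of_gt (hpos n))⟩
  have hμinj : Function.Injective μf := by
    intro n m h
    have h2I : (2 * I : ℂ) ≠ 0 := by simp [I_ne_zero]
    have hc : (η n : ℂ) = η m := mul_left_cancel₀ h2I (by simpa [hμf, mul_assoc] using h)
    have hnm : η n = η m := by exact_mod_cast hc
    by_contra hne
    rcases lt_or_gt_of_ne hne with h1 | h1
    · exact absurd hnm (ne_of_gt (hdec n m h1))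
    · exact absurd hnm (ne_of_lt (hdec m n h1))
  set sP : Finset ℂ := Finset.image μf Finset.univ with hsP
  set sM : Finset ℂ := Finset.image (fun n => -μf n) Finset.univ with hsM
  set s : Finset ℂ := insert 0 (sP ∪ sM) with hs
  have habsμ : ∀ n, ‖μf n‖ = 2 * η n := by
    intro n
    simp only [hμf, norm_mul, Complex.norm_two, Complex.norm_I, Complex.norm_real, Real.norm_eq_abs, mul_one,
      abs_of_pos (hpos n)]
  have habs : ∀ μ ∈ s, ‖μ‖ < R := by
    intro μ hμ
    rcases Finset.mem_insert.mp hμ with h | h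
    · simpa [h] using hR0
    · rcases Finset.mem_union.mp h with h' | h' <;>
      · simp only [hsP, hsM, Finset.mem_image, Finset.mem_univ, true_and] at h'
        obtain ⟨n, rfl⟩ := h'
        have := hle n
        simp only [norm_neg, habsμ n]
        linarith
  have h0s : (0 : ℂ) ∉ sP ∪ sM := by
    simp only [Finset.mem_union, hsP, hsM, Finset.mem_image, Finset.mem_univ, true_and,
      not_or, not_exists]
    constructor
    · exact fun n h => hμ0 n h
    · exact fun n h => hμ0 n (neg_eq_zero.mp h)
  have hdisj : Disjoint sP sM := by
    rw [Finset.disjoint_left]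
    intro μ h1 h2
    simp only [hsP, hsM, Finset.mem_image, Finset.mem_univ, true_and] at h1 h2
    obtain ⟨n, rfl⟩ := h1
    obtain ⟨m, hm⟩ := h2
    have : (2 * I : ℂ) * ((η m : ℂ) + η n) = 0 := by
      simp only [hμf] at hm ⊢
      linear_combination -hm
    have h2I : (2 * I : ℂ) ≠ 0 := by simp [I_ne_zero]
    have : ((η m : ℂ) + (η n : ℂ)) = 0 := by
      rcases mul_eq_zero.mp this with h | h
      · exact absurd h h2I
      · exact h
    have : η m + η n = 0 := by exact_mod_cast this
    have := hpos m; have := hpos n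
    linarith
  have hμminj : Function.Injective (fun n => -μf n) := fun n m h =>
    hμinj (neg_injective h)
  have hcards : s.card = 2 * N + 1 := by
    rw [hs, Finset.card_insert_of_notMem h0s, Finset.card_union_of_disjoint hdisj,
      hsP, hsM, Finset.card_image_of_injective _ hμinj,
      Finset.card_image_of_injective _ hμminj, Finset.card_univ, Fintype.card_fin]
    omega
  have hprod : ∀ z : ℂ, ∏ μ ∈ s, (z - μ) = z * ∏ n : Fin N, (z ^ 2 + 4 * (η n : ℂ) ^ 2) := by
    intro z
    rw [hs, Finset.prod_insert h0s, Finset.prod_union hdisj, hsP, hsM,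
      Finset.prod_image (fun a _ b _ h => hμinj h),
      Finset.prod_image (fun a _ b _ h => hμminj h)]
    rw [sub_zero, ← Finset.prod_mul_distrib]
    congr 1
    refine Finset.prod_congr rfl fun n _ => ?_
    simp only [hμf, sub_neg_eq_add]
    linear_combination (-4 : ℂ) * (η n : ℂ) ^ 2 * Complex.I_sq
  have hnegs : s.image (fun μ => -μ) = s := by
    have hPM : sP.image (fun μ => -μ) = sM := by
      rw [hsP, hsM, Finset.image_image]
      simp only [Function.comp_def]
    have hMP : sM.image (fun μ => -μ) = sP := by
      rw [hsP, hsM, Finset.image_image]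
      simp only [Function.comp_def, neg_neg]
    rw [hs, Finset.image_insert, Finset.image_union, neg_zero, hPM, hMP, Finset.union_comm]
  -- main functions
  set Sb : ℂ → ℂ := kmSb (fun n => deriv (f n) x) with hSbdef
  set Gf : ℂ → ℂ := fun z => kmAA f w z *
      ((-1 : ℂ) ^ N * (Sb (-z) + kmAA f x (-z) * (I * z))) *
      Complex.exp (I * z * ((x : ℂ) - (w : ℂ))) with hGf
  have hGd : Differentiable ℂ Gf := by
    rw [hGf, hSbdef]
    unfold kmAA kmSb
    fun_prop
  -- formulas
  have h1 : ∀ (y : ℝ) (z : ℂ), z ≠ 0 → fplus y z =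
      kmAA f y z * ((z ^ N)⁻¹) *
        Complex.exp (-(I / 2) * (z * (y : ℂ) + z ^ 3 * (t : ℂ))) := by
    intro y z hz
    have hzN : (z : ℂ) ^ N ≠ 0 := pow_ne_zero _ hz
    rw [hfplus]
    congr 1
    unfold kmAA kmSb
    rw [add_mul, mul_inv_cancel₀ hzN, Finset.sum_mul]
    congr 1
    refine Finset.sum_congr rfl fun n _ => ?_
    rw [zpow_sub₀ hz, zpow_natCast, zpow_natCast, div_eq_mul_inv]
    ring
  have h2 : ∀ z : ℂ, z ≠ 0 → gplus w z = kmAA f w z * (z ^ N)⁻¹ := by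
    intro z hz
    rw [hgplus, h1 w z hz, mul_assoc, ← Complex.exp_add,
      show -(I/2) * (z * (w : ℂ) + z ^ 3 * (t : ℂ)) + I/2 * (z * (w : ℂ) + z ^ 3 * (t : ℂ))
        = 0 by ring, Complex.exp_zero, mul_one]
  have h4 : ∀ z : ℂ, z ≠ 0 → hminus x z =
      ((-z) ^ N)⁻¹ * ((Sb (-z) + kmAA f x (-z) * (I * z)) *
        Complex.exp (I * z * (x : ℂ) + I * z ^ 3 * (t : ℂ))) := by
    intro z hz
    have hgm : (fun y : ℝ => gminus y z) = fun y : ℝ =>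
        ((-z) ^ N)⁻¹ * (kmAA f y (-z) *
          Complex.exp (I * z * (y : ℂ) + I * z ^ 3 * (t : ℂ))) := by
      funext y
      have he : Complex.exp (-(I/2) * ((-z) * (y : ℂ) + (-z) ^ 3 * (t : ℂ))) *
          Complex.exp ((I/2) * (z * (y : ℂ) + z ^ 3 * (t : ℂ))) =
          Complex.exp (I * z * (y : ℂ) + I * z ^ 3 * (t : ℂ)) := by
        rw [← Complex.exp_add]
        congr 1
        ring
      rw [hgminus, h1 y (-z) (neg_ne_zero.mpr hz), ← he]
      ring
    rw [hhminus, hgm]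
    exact ((kmAA_exp_hasDerivAt f hdf (-z) (I * z) (I * z ^ 3 * (t : ℂ)) x).const_mul
      (((-z) ^ N)⁻¹)).deriv
  -- the reflection relations
  have hrelA : ∀ n : Fin N, ∃ κ : ℂ, κ ≠ 0 ∧
      (∀ y : ℝ, kmAA f y (μf n) = κ * kmAA f y (-μf n) * Complex.exp (I * μf n * (y : ℂ))) ∧
      Sb (μf n) = κ * (Sb (-μf n) + kmAA f x (-μf n) * (I * μf n)) *
        Complex.exp (I * μf n * (x : ℂ)) := by
    intro n
    have hμ : μf n ≠ 0 := hμ0 n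
    have hμN : (μf n) ^ N ≠ 0 := pow_ne_zero _ hμ
    set e0 : ℂ := (-1 : ℂ) ^ (n : ℕ) * (Real.exp (2 * η n * α n) : ℂ) with he0def
    have he0 : e0 ≠ 0 := by
      refine mul_ne_zero (pow_ne_zero _ (by norm_num)) ?_
      exact_mod_cast Real.exp_ne_zero _
    have h11 : ((-1 : ℂ)) ^ N * (-1 : ℂ) ^ N = 1 := by
      rw [← pow_add, ← two_mul, pow_mul, neg_one_sq, one_pow]
    have hinv : (((-1 : ℂ)) ^ N)⁻¹ = (-1 : ℂ) ^ N := inv_eq_of_mul_eq_one_left h11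
    have hy : ∀ y : ℝ, kmAA f y (μf n) =
        e0 * (-1 : ℂ) ^ N * Complex.exp (I * (μf n) ^ 3 * (t : ℂ)) *
          kmAA f y (-μf n) * Complex.exp (I * μf n * (y : ℂ)) := by
      intro y
      have h := hrel y n
      rw [show (2 * Complex.I * (η n : ℂ)) = μf n from rfl] at h
      rw [h1 y (μf n) hμ, h1 y (-μf n) (neg_ne_zero.mpr hμ)] at h
      have hM : ((μf n) ^ N)⁻¹ *
          Complex.exp (-(I/2) * (μf n * (y : ℂ) + (μf n) ^ 3 * (t : ℂ))) ≠ 0 :=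
        mul_ne_zero (inv_ne_zero hμN) (Complex.exp_ne_zero _)
      refine mul_right_cancel₀ hM ?_
      have hEE : Complex.exp (I * μf n * (y : ℂ)) * Complex.exp (I * (μf n) ^ 3 * (t : ℂ)) *
          Complex.exp (-(I/2) * (μf n * (y : ℂ) + (μf n) ^ 3 * (t : ℂ))) =
          Complex.exp (-(I/2) * ((-μf n) * (y : ℂ) + (-μf n) ^ 3 * (t : ℂ))) := by
        rw [← Complex.exp_add, ← Complex.exp_add]
        congr 1
        ring
      calc kmAA f y (μf n) * (((μf n) ^ N)⁻¹ *
            Complex.exp (-(I/2) * (μf n * (y : ℂ) + (μf n) ^ 3 * (t : ℂ))))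
          = kmAA f y (μf n) * ((μf n) ^ N)⁻¹ *
            Complex.exp (-(I/2) * (μf n * (y : ℂ) + (μf n) ^ 3 * (t : ℂ))) := by ring
        _ = e0 * (kmAA f y (-μf n) * ((-μf n) ^ N)⁻¹ *
            Complex.exp (-(I/2) * ((-μf n) * (y : ℂ) + (-μf n) ^ 3 * (t : ℂ)))) := h
        _ = e0 * (-1 : ℂ) ^ N * Complex.exp (I * (μf n) ^ 3 * (t : ℂ)) *
            kmAA f y (-μf n) * Complex.exp (I * μf n * (y : ℂ)) *
            (((μf n) ^ N)⁻¹ *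
              Complex.exp (-(I/2) * (μf n * (y : ℂ) + (μf n) ^ 3 * (t : ℂ)))) := by
          rw [← hEE, neg_pow, mul_inv, hinv]
          ring
    refine ⟨e0 * (-1 : ℂ) ^ N * Complex.exp (I * (μf n) ^ 3 * (t : ℂ)), ?_, ?_, ?_⟩
    · exact mul_ne_zero (mul_ne_zero he0 (pow_ne_zero _ (by norm_num)))
        (Complex.exp_ne_zero _)
    · intro y
      exact hy y
    · -- differentiate the relation at x
      set κ : ℂ := e0 * (-1 : ℂ) ^ N * Complex.exp (I * (μf n) ^ 3 * (t : ℂ)) with hκdef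
      have hL : HasDerivAt (fun y => kmAA f y (μf n)) (Sb (μf n)) x :=
        kmAA_hasDerivAt f hdf (μf n) x
      have hR0' := (kmAA_exp_hasDerivAt f hdf (-μf n) (I * μf n) 0 x).const_mul κ
      have hfunext : (fun y : ℝ => κ * (kmAA f y (-μf n) *
          Complex.exp (I * μf n * (y : ℂ) + 0))) = fun y : ℝ => kmAA f y (μf n) := by
        funext y
        rw [hy y, add_zero]
        ring
      rw [hfunext] at hR0'
      have := hL.unique hR0'
      rw [this, add_zero]
      ring
  -- values of G at the roots
  have h8 : ∀ μ ∈ s, Gf μ = kmAA f w (-μ) * ((-1 : ℂ) ^ N * Sb μ) := by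
    intro μ hμ
    rcases Finset.mem_insert.mp hμ with h | h
    · subst h
      simp [hGf]
    rcases Finset.mem_union.mp h with h' | h' <;>
      simp only [hsP, hsM, Finset.mem_image, Finset.mem_univ, true_and] at h' <;>
      obtain ⟨n, rfl⟩ := h' <;>
      obtain ⟨κ, hκ, hyrel, hSrel⟩ := hrelA n
    · -- μ = μf n
      have hexp2 : Complex.exp (I * μf n * (w : ℂ)) *
          Complex.exp (I * μf n * ((x : ℂ) - (w : ℂ))) =
          Complex.exp (I * μf n * (x : ℂ)) := by
        rw [← Complex.exp_add]; congr 1; ring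
      simp only [hGf]
      rw [hSrel, hyrel w]
      linear_combination (κ * kmAA f w (-μf n) * (-1 : ℂ) ^ N *
        (Sb (-μf n) + kmAA f x (-μf n) * (I * μf n))) * hexp2
    · -- μ = -μf n
      have hexp3 : Complex.exp (I * μf n * (x : ℂ)) *
          Complex.exp (I * -μf n * ((x : ℂ) - (w : ℂ))) =
          Complex.exp (I * μf n * (w : ℂ)) := by
        rw [← Complex.exp_add]; congr 1; ring
      simp only [hGf, neg_neg]
      rw [hSrel, hyrel x, hyrel w]
      linear_combination (kmAA f w (-μf n) * (-1 : ℂ) ^ N * κ * Sb (-μf n)) * hexp3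
  -- sum of residues is zero
  have hceven : ∀ ν ∈ s, (∏ k ∈ s.erase (-ν), (-ν - k))⁻¹ =
      (∏ k ∈ s.erase ν, (ν - k))⁻¹ := by
    intro ν hν
    have him : s.erase (-ν) = (s.erase ν).image (fun μ => -μ) := by
      rw [Finset.image_erase neg_injective, hnegs]
    rw [him, Finset.prod_image (fun a _ b _ h => neg_injective h)]
    have : ∀ j ∈ s.erase ν, -ν - (-j) = (-1) * (ν - j) := fun j _ => by ring
    rw [Finset.prod_congr rfl this, Finset.prod_mul_distrib, Finset.prod_const,
      Finset.card_erase_of_mem hν, hcards]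
    norm_num [pow_mul]
  have hmemneg : ∀ μ ∈ s, -μ ∈ s := by
    intro μ hμ
    have h2 : -μ ∈ s.image (fun ν => -ν) := Finset.mem_image.mpr ⟨μ, hμ, rfl⟩
    rwa [hnegs] at h2
  have h9 : ∑ μ ∈ s, (∏ ν ∈ s.erase μ, (μ - ν))⁻¹ * Gf μ = 0 := by
    have hstep1 : ∑ μ ∈ s, (∏ ν ∈ s.erase μ, (μ - ν))⁻¹ * Gf μ =
        ∑ μ ∈ s, (∏ ν ∈ s.erase μ, (μ - ν))⁻¹ *
          (kmAA f w μ * ((-1 : ℂ) ^ N * Sb (-μ))) := by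
      refine Finset.sum_bij' (fun μ _ => -μ) (fun μ _ => -μ) ?_ ?_ ?_ ?_ ?_
      · intro μ hμ
        exact hmemneg μ hμ
      · intro μ hμ
        exact hmemneg μ hμ
      · intro μ _; exact neg_neg μ
      · intro μ _; exact neg_neg μ
      · intro μ hμ
        rw [h8 μ hμ, hceven μ hμ, neg_neg]
    rw [hstep1]
    -- now apply the Lagrange identity
    set pA : Polynomial ℂ := Polynomial.X ^ N +
      ∑ n : Fin N, Polynomial.C (f n w) * Polynomial.X ^ (n : ℕ) with hpA
    set pC : Polynomial ℂ := ∑ n : Fin N,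
      Polynomial.C ((-1 : ℂ) ^ (N + (n : ℕ)) * deriv (f n) x) * Polynomial.X ^ (n : ℕ)
      with hpC
    have heval : ∀ ν : ℂ, (pA * pC).eval ν =
        kmAA f w ν * ((-1 : ℂ) ^ N * Sb (-ν)) := by
      intro ν
      rw [Polynomial.eval_mul]
      have hA : pA.eval ν = kmAA f w ν := by
        simp only [hpA, Polynomial.eval_add, Polynomial.eval_pow, Polynomial.eval_X,
          Polynomial.eval_finset_sum, Polynomial.eval_mul, Polynomial.eval_C]
        unfold kmAA kmSb
        congr 1
        exact Finset.sum_congr rfl fun n _ => by ring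
      have hC : pC.eval ν = (-1 : ℂ) ^ N * Sb (-ν) := by
        simp only [hpC, Polynomial.eval_finset_sum, Polynomial.eval_mul, Polynomial.eval_C,
          Polynomial.eval_pow, Polynomial.eval_X]
        rw [hSbdef]
        unfold kmSb
        rw [Finset.mul_sum]
        refine Finset.sum_congr rfl fun n _ => ?_
        rw [neg_pow ν, pow_add]
        ring
      rw [hA, hC]
    have hdegA : pA.degree ≤ (N : WithBot ℕ) := by
      refine le_trans (Polynomial.degree_add_le _ _) (max_le ?_ ?_)
      · exact Polynomial.degree_X_pow_le N
      · refine le_trans (Polynomial.degree_sum_le _ _) (Finset.sup_le fun n _ => ?_)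
        refine le_trans (Polynomial.degree_mul_le _ _) ?_
        refine le_trans (add_le_add Polynomial.degree_C_le (Polynomial.degree_X_pow_le _)) ?_
        rw [zero_add]
        exact_mod_cast Nat.cast_le.mpr (le_of_lt n.isLt)
    have hdegC : pC.degree < (N : WithBot ℕ) := by
      refine lt_of_le_of_lt (Polynomial.degree_sum_le _ _) ?_
      rw [Finset.sup_lt_iff (by exact_mod_cast WithBot.bot_lt_coe N)]
      intro n _
      refine lt_of_le_of_lt (Polynomial.degree_mul_le _ _) ?_
      refine lt_of_le_of_lt (add_le_add Polynomial.degree_C_le (Polynomial.degree_X_pow_le _)) ?_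
      rw [zero_add]
      exact_mod_cast Nat.cast_lt.mpr n.isLt
    have hdeg : (pA * pC).degree < ((s.card - 1 : ℕ) : WithBot ℕ) := by
      rcases eq_or_ne pC 0 with h0 | h0
      · rw [h0, mul_zero, Polynomial.degree_zero]
        exact WithBot.bot_lt_coe _
      have hN1 : 1 ≤ N := hN
      have : (pA * pC).degree ≤ (N : WithBot ℕ) + pC.degree :=
        le_trans (Polynomial.degree_mul_le _ _) (add_le_add_left hdegA _)
      refine lt_of_le_of_lt this ?_
      have hcard : (s.card - 1 : ℕ) = 2 * N := by omega
      rw [hcard]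
      calc (N : WithBot ℕ) + pC.degree < (N : WithBot ℕ) + N := by
            refine WithBot.add_lt_add_left (by exact_mod_cast WithBot.coe_ne_bot) hdegC
        _ = ((2 * N : ℕ) : WithBot ℕ) := by
            rw [two_mul]
            exact_mod_cast (Nat.cast_add _ _).symm
    have := km_lagrange_sum_zero s (pA * pC) hdeg
    rw [← this]
    refine Finset.sum_congr rfl fun μ _ => ?_
    rw [heval μ]
    ring
  -- integrand identity on the circle
  have h5 : ∀ z : ℂ, ‖z‖ = R → Y x w z =
      ∑ μ ∈ s, (∏ ν ∈ s.erase μ, (μ - ν))⁻¹ * ((z - μ)⁻¹ * Gf z) := by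
    intro z hz
    have hz0 : z ≠ 0 := by
      intro h
      rw [h] at hz
      simp at hz
      exact absurd hz.symm (ne_of_gt hR0)
    have hzs : ∀ μ ∈ s, z ≠ μ := by
      intro μ hμ h
      rw [← h] at hμ
      exact absurd hz (ne_of_lt (habs z hμ))
    have hP : ∏ μ ∈ s, (z - μ) ≠ 0 :=
      Finset.prod_ne_zero_iff.mpr fun μ hμ => sub_ne_zero.mpr (hzs μ hμ)
    have hD : (∏ n : Fin N, (z ^ 2 + 4 * (η n : ℂ) ^ 2)) ≠ 0 := by
      intro h
      apply hP
      rw [hprod z, h, mul_zero]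
    have hstep1 : Y x w z = Gf z / (z * ∏ n : Fin N, (z ^ 2 + 4 * (η n : ℂ) ^ 2)) := by
      rw [hY, h2 z hz0, h4 z hz0, hGf]
      have hzN : (z : ℂ) ^ N ≠ 0 := pow_ne_zero _ hz0
      have h11 : ((-1 : ℂ)) ^ N * (-1 : ℂ) ^ N = 1 := by
        rw [← pow_add, ← two_mul, pow_mul, neg_one_sq, one_pow]
      have hE : Complex.exp (-I * (z * (w : ℂ) + z ^ 3 * (t : ℂ))) *
          Complex.exp (I * z * (x : ℂ) + I * z ^ 3 * (t : ℂ)) =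
          Complex.exp (I * z * ((x : ℂ) - (w : ℂ))) := by
        rw [← Complex.exp_add]; congr 1; ring
      have hzp : z ^ ((1 : ℤ) - 2 * (N : ℤ)) * (z ^ N * z ^ N) = z := by
        rw [← zpow_natCast z N, ← zpow_add₀ hz0, ← zpow_add₀ hz0]
        rw [show (1 : ℤ) - 2 * (N : ℤ) + ((N : ℤ) + (N : ℤ)) = 1 by ring, zpow_one]
      rw [neg_pow]
      rw [div_eq_div_iff (mul_ne_zero (zpow_ne_zero _ hz0) hD)
        (mul_ne_zero hz0 hD)]
      field_simp
      ring_nf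
      have hA1 : ((-1 : ℂ)) ^ (N * 2) = 1 := by
        rw [mul_comm, pow_mul, neg_one_sq, one_pow]
      have hz2 : z ^ (N * 2) * z ^ ((1 : ℤ) - (N : ℤ) * 2) = z := by
        rw [← zpow_natCast z (N * 2), ← zpow_add₀ hz0,
          show ((N * 2 : ℕ) : ℤ) + (1 - (N : ℤ) * 2) = 1 by push_cast; ring, zpow_one]
      have hE2 : Complex.exp (-(I * z * (w : ℂ)) - I * z ^ 3 * (t : ℂ)) *
          Complex.exp (I * z * (x : ℂ) + I * z ^ 3 * (t : ℂ)) =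
          Complex.exp (-(I * z * (w : ℂ)) + I * z * (x : ℂ)) := by
        rw [← Complex.exp_add]; congr 1; ring
      have hpe : (∏ n : Fin N, (z ^ 2 + (η n : ℂ) ^ 2 * 4)) =
          ∏ n : Fin N, (z ^ 2 + 4 * (η n : ℂ) ^ 2) :=
        Finset.prod_congr rfl fun n _ => by ring
      rw [hA1, mul_one, mul_one]
      have hE3 : Complex.exp (-(z * I * (w : ℂ)) - z ^ 3 * I * (t : ℂ)) *
          Complex.exp (z * I * (x : ℂ) + z ^ 3 * I * (t : ℂ)) =
          Complex.exp (-(z * I * (w : ℂ)) + z * I * (x : ℂ)) := by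
        rw [← Complex.exp_add]; congr 1; ring
      linear_combination
        (kmAA f w z * z * Sb (-z) + kmAA f w z * z ^ 2 * I * kmAA f x (-z)) * hE3 -
        (kmAA f w z * z * I * kmAA f x (-z) + kmAA f w z * Sb (-z)) *
          Complex.exp (-(z * I * (w : ℂ)) + z * I * (x : ℂ)) * hz2
    rw [hstep1, div_eq_mul_inv, ← hprod z,
      km_partial_fractions s ⟨0, by rw [hs]; exact Finset.mem_insert_self 0 _⟩ z hzs,
      Finset.mul_sum]
    exact Finset.sum_congr rfl fun μ _ => by ring
  -- assemble
  have hcongr : (∮ lam in C(0, R), Y x w lam) =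
      ∮ z in C(0, R), ∑ μ ∈ s, (∏ ν ∈ s.erase μ, (μ - ν))⁻¹ * ((z - μ)⁻¹ * Gf z) := by
    refine circleIntegral.integral_congr hR0.le fun z hz => ?_
    exact h5 z (by simpa [mem_sphere_iff_norm] using hz)
  rw [hcongr, km_circle_sum hR0 s _ Gf hGd.continuous habs]
  have : ∀ μ ∈ s, (∏ ν ∈ s.erase μ, (μ - ν))⁻¹ * (∮ z in C(0, R), (z - μ)⁻¹ * Gf z) =
      2 * Real.pi * I * ((∏ ν ∈ s.erase μ, (μ - ν))⁻¹ * Gf μ) := by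
    intro μ hμ
    rw [km_cauchy_term hR0 Gf hGd μ (habs μ hμ)]
    ring
  rw [Finset.sum_congr rfl this, ← Finset.mul_sum, h9, mul_zero]
end

section
/- Assume the Kay–Moses setup: N ≥ 1, η₁ > ... > η_N > 0, α₁, ..., α_N ∈ ℝ, t ∈ ℝ fixed, and C¹ functions f₀, ..., f_{N−1} : ℝ → ℂ such that f₊(x,λ) := (1 + Σ_{n=0}^{N−1} λ^{n−N} f_n(x))·exp(−(i/2)(λx + λ³t)) satisfies f₊(x, 2iη_n) = (−1)^{n+1}·exp(2η_nα_n)·f₊(x, −2iη_n) for all x ∈ ℝ and n = 1, ..., N. Set f₋(x,λ) := f₊(x,−λ), g₋(x,λ) := f₋(x,λ)·exp((i/2)(λx + λ³t)), h₋(x,λ) := ∂_x g₋(x,λ), and H(x,λ) := λ^N·h₋(x,λ). Then for every x ∈ ℝ, H(x,0) = Σ_{n=1}^{N} [(−1)^n·exp(2η_nα_n)·∏_{k≠n} η_k/(η_n − η_k)]·H(x, 2iη_n). -/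
open Complex Finset Polynomial Filter Topology

lemma lagrange_at_zero {N : ℕ} (v : Fin N → ℂ) (hv : Function.Injective v)
    (p : ℂ[X]) (hdeg : p.degree < (N : WithBot ℕ)) :
    p.eval 0 = ∑ i : Fin N, p.eval (v i) *
      ∏ j ∈ Finset.univ.erase i, (-(v j)) / (v i - v j) := by
  have hinj : Set.InjOn v (Finset.univ : Finset (Fin N)) := fun a _ b _ h => hv h
  have h := Lagrange.eq_interpolate (s := Finset.univ) (v := v) hinj
    (by simpa using hdeg)
  calc p.eval 0
      = (Lagrange.interpolate Finset.univ v (fun i => p.eval (v i))).eval 0 := by rw [← h]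
    _ = _ := by
        rw [Lagrange.interpolate_apply, Polynomial.eval_finset_sum]
        refine Finset.sum_congr rfl fun i _ => ?_
        rw [eval_mul, eval_C, Lagrange.basis, eval_prod]
        congr 1
        refine Finset.prod_congr rfl fun j _ => ?_
        rw [Lagrange.basisDivisor, eval_mul, eval_C, eval_sub, eval_X, eval_C,
          zero_sub, div_eq_mul_inv, mul_comm]

/-- In the Kay–Moses setup, the entire mode function
`H(x,λ) = λ^N·h₋(x,λ)` satisfies the Lagrange interpolation identity
`H(x,0) = Σ_n [(−1)^n·exp(2η_nα_n)·∏_{k≠n} η_k/(η_n−η_k)]·H(x,2iη_n)`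
(with paper indexing `n = 1, ..., N`). -/
theorem kay_moses_bound_state_interpolation
    (N : ℕ) (hN : 0 < N) (η : Fin N → ℝ) (α : Fin N → ℝ) (t : ℝ)
    (hpos : ∀ n, 0 < η n)
    (hdec : ∀ m n : Fin N, m < n → η n < η m)
    (f : Fin N → ℝ → ℂ) (hf : ∀ n, ContDiff ℝ 1 (f n))
    (fplus : ℝ → ℂ → ℂ)
    (hfplus : ∀ (x : ℝ) (lam : ℂ), fplus x lam =
      (1 + ∑ n : Fin N, lam ^ (((n : ℕ) : ℤ) - (N : ℤ)) * f n x) *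
        Complex.exp (-(Complex.I / 2) * (lam * (x : ℂ) + lam ^ 3 * (t : ℂ))))
    (hrel : ∀ (x : ℝ) (n : Fin N),
      fplus x (2 * Complex.I * (η n : ℂ)) =
        (-1 : ℂ) ^ (n : ℕ) * (Real.exp (2 * η n * α n) : ℂ) *
          fplus x (-(2 * Complex.I * (η n : ℂ))))
    (gminus : ℝ → ℂ → ℂ)
    (hgminus : ∀ (x : ℝ) (lam : ℂ), gminus x lam =
      fplus x (-lam) * Complex.exp ((Complex.I / 2) * (lam * (x : ℂ) + lam ^ 3 * (t : ℂ))))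
    (hminus : ℝ → ℂ → ℂ)
    (hhminus : ∀ (x : ℝ) (lam : ℂ), hminus x lam = deriv (fun y => gminus y lam) x)
    (H : ℝ → ℂ → ℂ)
    (hH : ∀ (x : ℝ) (lam : ℂ), lam ≠ 0 → H x lam = lam ^ (N : ℕ) * hminus x lam)
    (hHentire : ∀ x : ℝ, Differentiable ℂ (fun lam => H x lam)) :
    ∀ x : ℝ, H x 0 =
      ∑ n : Fin N,
        ((-1 : ℂ) ^ ((n : ℕ) + 1) * (Real.exp (2 * η n * α n) : ℂ) *
            ∏ k ∈ Finset.univ.erase n, ((η k : ℂ) / ((η n : ℂ) - (η k : ℂ)))) *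
          H x (2 * Complex.I * (η n : ℂ)) := by
  intro x
  -- notation
  set μ : Fin N → ℂ := fun n => 2 * Complex.I * (η n : ℂ) with hμdef
  set c : Fin N → ℂ := fun n => (-1 : ℂ) ^ (n : ℕ) * (Real.exp (2 * η n * α n) : ℂ) with hcdef
  have hημem : ∀ n, (η n : ℂ) ≠ 0 := fun n => by
    exact_mod_cast (hpos n).ne'
  have hμ0 : ∀ n, μ n ≠ 0 := fun n => by
    simp only [hμdef]
    exact mul_ne_zero (mul_ne_zero two_ne_zero Complex.I_ne_zero) (hημem n)
  have hηinj : Function.Injective η := by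
    intro a b hab
    by_contra hne
    rcases lt_or_gt_of_ne hne with h' | h'
    · exact absurd hab (hdec a b h').ne'
    · exact absurd hab (hdec b a h').ne
  have hμinj : Function.Injective μ := by
    intro a b hab
    apply hηinj
    have : (η a : ℂ) = (η b : ℂ) := by
      have h2 : (2 * Complex.I : ℂ) ≠ 0 := mul_ne_zero two_ne_zero Complex.I_ne_zero
      replace hab : 2 * Complex.I * (η a : ℂ) = 2 * Complex.I * (η b : ℂ) := hab
      replace hab := mul_left_cancel₀ h2 hab
      exact_mod_cast hab
    exact_mod_cast this
  have hc0 : ∀ n, c n ≠ 0 := fun n => by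
    simp only [hcdef]
    exact mul_ne_zero (pow_ne_zero _ (by norm_num)) (by exact_mod_cast (Real.exp_pos _).ne')
  -- derivatives of f
  have hfd : ∀ (m : Fin N) (y : ℝ), HasDerivAt (f m) (deriv (f m) y) y := fun m y =>
    (((hf m).differentiable one_ne_zero) y).hasDerivAt
  -- the polynomial P
  set p : Polynomial ℂ := ∑ m : Fin N, Polynomial.C (deriv (f m) x) * Polynomial.X ^ (m : ℕ)
    with hpdef
  have hpdeg : p.degree < (N : WithBot ℕ) := by
    refine lt_of_le_of_lt (Polynomial.degree_sum_le _ _) ?_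
    rw [Finset.sup_lt_iff (by exact_mod_cast WithBot.bot_lt_coe N)]
    intro m _
    exact lt_of_le_of_lt (Polynomial.degree_C_mul_X_pow_le _ _)
      (by exact_mod_cast m.isLt)
  have hpeval : ∀ z : ℂ, p.eval z = ∑ m : Fin N, z ^ (m : ℕ) * deriv (f m) x := by
    intro z
    rw [hpdef, Polynomial.eval_finset_sum]
    exact Finset.sum_congr rfl fun m _ => by
      rw [eval_mul, eval_C, eval_pow, eval_X, mul_comm]
  set z0 : Fin N := ⟨0, hN⟩ with hz0def
  have hzero_term : ∀ (g : Fin N → ℂ),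
      (∑ m : Fin N, (0 : ℂ) ^ (m : ℕ) * g m) = g z0 := by
    intro g
    rw [Finset.sum_eq_single z0]
    · norm_num [hz0def]
    · intro m _ hm
      have : (m : ℕ) ≠ 0 := by
        intro h0
        exact hm (Fin.ext h0)
      rw [zero_pow this, zero_mul]
    · intro h; exact absurd (Finset.mem_univ z0) h
  -- STEP A: values at the soliton eigenvalues
  have hA : ∀ n : Fin N, p.eval (μ n) = c n * H x (μ n) := by
    intro n
    -- g₋(y, μ n) loses its exponential
    have hg : ∀ y : ℝ, gminus y (μ n) =
        (c n)⁻¹ * (1 + ∑ m : Fin N, (μ n) ^ (((m : ℕ) : ℤ) - (N : ℤ)) * f m y) := by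
      intro y
      have hinv : fplus y (-(μ n)) = (c n)⁻¹ * fplus y (μ n) := by
        rw [hrel y n]
        rw [inv_mul_cancel_left₀ (hc0 n)]
      rw [hgminus, hinv, hfplus]
      have hE : Complex.exp (-(Complex.I / 2) * (μ n * (y : ℂ) + (μ n) ^ 3 * (t : ℂ))) *
          Complex.exp ((Complex.I / 2) * (μ n * (y : ℂ) + (μ n) ^ 3 * (t : ℂ))) = 1 := by
        rw [← Complex.exp_add, show -(Complex.I / 2) * (μ n * (y : ℂ) + (μ n) ^ 3 * (t : ℂ)) +
          (Complex.I / 2) * (μ n * (y : ℂ) + (μ n) ^ 3 * (t : ℂ)) = 0 by ring, Complex.exp_zero]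
      set S := ∑ m : Fin N, (μ n) ^ (((m : ℕ) : ℤ) - (N : ℤ)) * f m y
      linear_combination ((c n)⁻¹ * (1 + S)) * hE
    -- its x-derivative
    have hder : HasDerivAt (fun y : ℝ => gminus y (μ n))
        ((c n)⁻¹ * ∑ m : Fin N, (μ n) ^ (((m : ℕ) : ℤ) - (N : ℤ)) * deriv (f m) x) x := by
      have : (fun y : ℝ => gminus y (μ n)) = fun y : ℝ =>
          (c n)⁻¹ * (1 + ∑ m : Fin N, (μ n) ^ (((m : ℕ) : ℤ) - (N : ℤ)) * f m y) :=
        funext hg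
      rw [this]
      exact (((HasDerivAt.fun_sum (fun m _ => (hfd m x).const_mul
        ((μ n) ^ (((m : ℕ) : ℤ) - (N : ℤ))))).const_add 1).const_mul _)
    have hhm : hminus x (μ n) =
        (c n)⁻¹ * ∑ m : Fin N, (μ n) ^ (((m : ℕ) : ℤ) - (N : ℤ)) * deriv (f m) x := by
      rw [hhminus]; exact hder.deriv
    have hzp : ∀ m : Fin N,
        (μ n) ^ (N : ℕ) * (μ n) ^ (((m : ℕ) : ℤ) - (N : ℤ)) = (μ n) ^ (m : ℕ) := by
      intro m
      rw [← zpow_natCast (μ n) (m : ℕ), ← zpow_natCast (μ n) N, ← zpow_add₀ (hμ0 n)]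
      congr 1
      omega
    have hHμ : H x (μ n) = (c n)⁻¹ * p.eval (μ n) := by
      rw [hH x (μ n) (hμ0 n), hhm, hpeval, mul_left_comm]
      congr 1
      rw [Finset.mul_sum]
      refine Finset.sum_congr rfl fun m _ => ?_
      linear_combination deriv (f m) x * hzp m
    rw [hHμ, mul_inv_cancel_left₀ (hc0 n)]
  -- STEP B: value at λ = 0 via continuity
  have hB : H x 0 = (-1 : ℂ) ^ N * p.eval 0 := by
    set G : ℂ → ℂ := fun lam =>
      ((-1 : ℂ) ^ N * (∑ m : Fin N, (-1 : ℂ) ^ (m : ℕ) * lam ^ (m : ℕ) * deriv (f m) x) +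
        Complex.I * lam * (lam ^ N +
          (-1 : ℂ) ^ N * ∑ m : Fin N, (-1 : ℂ) ^ (m : ℕ) * lam ^ (m : ℕ) * f m x)) *
        Complex.exp (Complex.I * (lam * (x : ℂ) + lam ^ 3 * (t : ℂ))) with hGdef
    have hGeq : ∀ lam : ℂ, lam ≠ 0 → H x lam = G lam := by
      intro lam hlam
      -- explicit form of g₋
      have hg : ∀ y : ℝ, gminus y lam =
          (1 + ∑ m : Fin N, (-lam) ^ (((m : ℕ) : ℤ) - (N : ℤ)) * f m y) *
            Complex.exp (Complex.I * (lam * (y : ℂ) + lam ^ 3 * (t : ℂ))) := by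
        intro y
        rw [hgminus, hfplus]
        have hE : Complex.exp (-(Complex.I / 2) * (-lam * (y : ℂ) + (-lam) ^ 3 * (t : ℂ))) *
            Complex.exp ((Complex.I / 2) * (lam * (y : ℂ) + lam ^ 3 * (t : ℂ))) =
            Complex.exp (Complex.I * (lam * (y : ℂ) + lam ^ 3 * (t : ℂ))) := by
          rw [← Complex.exp_add]
          congr 1
          ring
        set S := ∑ m : Fin N, (-lam) ^ (((m : ℕ) : ℤ) - (N : ℤ)) * f m y
        linear_combination (1 + S) * hE
      have hder : HasDerivAt (fun y : ℝ => gminus y lam)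
          ((∑ m : Fin N, (-lam) ^ (((m : ℕ) : ℤ) - (N : ℤ)) * deriv (f m) x) *
              Complex.exp (Complex.I * (lam * (x : ℂ) + lam ^ 3 * (t : ℂ))) +
            (1 + ∑ m : Fin N, (-lam) ^ (((m : ℕ) : ℤ) - (N : ℤ)) * f m x) *
              (Complex.exp (Complex.I * (lam * (x : ℂ) + lam ^ 3 * (t : ℂ))) *
                (Complex.I * lam))) x := by
        have hrw : (fun y : ℝ => gminus y lam) = fun y : ℝ =>
            (1 + ∑ m : Fin N, (-lam) ^ (((m : ℕ) : ℤ) - (N : ℤ)) * f m y) *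
              Complex.exp (Complex.I * (lam * (y : ℂ) + lam ^ 3 * (t : ℂ))) := funext hg
        rw [hrw]
        have hu : HasDerivAt (fun y : ℝ =>
            1 + ∑ m : Fin N, (-lam) ^ (((m : ℕ) : ℤ) - (N : ℤ)) * f m y)
            (∑ m : Fin N, (-lam) ^ (((m : ℕ) : ℤ) - (N : ℤ)) * deriv (f m) x) x :=
          (HasDerivAt.fun_sum (fun m _ => (hfd m x).const_mul _)).const_add 1
        have hy : HasDerivAt (fun y : ℝ => (y : ℂ)) 1 x := by
          simpa using (hasDerivAt_id x).ofReal_comp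
        have hw : HasDerivAt (fun y : ℝ => Complex.I * (lam * (y : ℂ) + lam ^ 3 * (t : ℂ)))
            (Complex.I * lam) x := by
          have := (((hy.const_mul lam).add_const (lam ^ 3 * (t : ℂ))).const_mul Complex.I)
          simpa using this
        exact hu.mul hw.cexp
      have hhm := hder.deriv
      rw [hH x lam hlam, hhminus, hhm]
      -- per-term power identity
      have hkey : ∀ m : Fin N, lam ^ (N : ℕ) * (-lam) ^ (((m : ℕ) : ℤ) - (N : ℤ)) =
          (-1 : ℂ) ^ N * ((-1 : ℂ) ^ (m : ℕ) * lam ^ (m : ℕ)) := by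
        intro m
        have hnl : (-lam) ≠ 0 := neg_ne_zero.mpr hlam
        have hz : (-lam) ^ (((m : ℕ) : ℤ) - (N : ℤ)) * ((-1 : ℂ) ^ N * lam ^ N) =
            (-1 : ℂ) ^ (m : ℕ) * lam ^ (m : ℕ) := by
          have h3 : (-lam) ^ (((m : ℕ) : ℤ) - (N : ℤ)) * (-lam) ^ (N : ℕ) = (-lam) ^ (m : ℕ) := by
            rw [← zpow_natCast (-lam) (m : ℕ), ← zpow_natCast (-lam) N, ← zpow_add₀ hnl]
            congr 1
            omega
          rw [neg_pow lam N, neg_pow lam (m : ℕ)] at h3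
          exact h3
        have h1 : ((-1 : ℂ)) ^ N * (-1 : ℂ) ^ N = 1 := by
          rw [← mul_pow]; norm_num
        linear_combination ((-1 : ℂ) ^ N) * hz -
          (lam ^ N * ((-lam) ^ (((m : ℕ) : ℤ) - (N : ℤ)))) * h1
      have hS1 : lam ^ (N : ℕ) *
          (∑ m : Fin N, (-lam) ^ (((m : ℕ) : ℤ) - (N : ℤ)) * deriv (f m) x) =
          (-1 : ℂ) ^ N * ∑ m : Fin N, (-1 : ℂ) ^ (m : ℕ) * lam ^ (m : ℕ) * deriv (f m) x := by
        rw [Finset.mul_sum, Finset.mul_sum]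
        exact Finset.sum_congr rfl fun m _ => by linear_combination deriv (f m) x * hkey m
      have hS2 : lam ^ (N : ℕ) *
          (∑ m : Fin N, (-lam) ^ (((m : ℕ) : ℤ) - (N : ℤ)) * f m x) =
          (-1 : ℂ) ^ N * ∑ m : Fin N, (-1 : ℂ) ^ (m : ℕ) * lam ^ (m : ℕ) * f m x := by
        rw [Finset.mul_sum, Finset.mul_sum]
        exact Finset.sum_congr rfl fun m _ => by linear_combination f m x * hkey m
      rw [hGdef]
      set E := Complex.exp (Complex.I * (lam * (x : ℂ) + lam ^ 3 * (t : ℂ)))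
      linear_combination E * hS1 + (Complex.I * lam * E) * hS2
    have hG0 : G 0 = (-1 : ℂ) ^ N * p.eval 0 := by
      have h1 : (∑ m : Fin N, (-1 : ℂ) ^ (m : ℕ) * (0 : ℂ) ^ (m : ℕ) * deriv (f m) x) =
          deriv (f z0) x := by
        rw [show (fun m : Fin N => (-1 : ℂ) ^ (m : ℕ) * (0 : ℂ) ^ (m : ℕ) * deriv (f m) x) =
          fun m : Fin N => (0 : ℂ) ^ (m : ℕ) * ((-1 : ℂ) ^ (m : ℕ) * deriv (f m) x) from
          funext fun m => by ring]
        rw [hzero_term (fun m => (-1 : ℂ) ^ (m : ℕ) * deriv (f m) x)]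
        simp [hz0def]
      have h2 : p.eval 0 = deriv (f z0) x := by
        rw [hpeval]
        exact hzero_term _
      simp only [hGdef]
      rw [h1, h2,
        show Complex.I * ((0 : ℂ) * (x : ℂ) + (0 : ℂ) ^ 3 * (t : ℂ)) = 0 by ring,
        Complex.exp_zero]
      ring
    -- continuity argument
    have hne : (𝓝[≠] (0 : ℂ)).NeBot := by infer_instance
    have hGcont : Continuous G := by
      rw [hGdef]
      fun_prop
    have ht1 : Filter.Tendsto (fun lam => H x lam) (𝓝[≠] (0 : ℂ)) (𝓝 (H x 0)) :=
      ((hHentire x).continuous.continuousAt).continuousWithinAt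
    have ht2 : Filter.Tendsto (fun lam => H x lam) (𝓝[≠] (0 : ℂ)) (𝓝 (G 0)) := by
      refine Filter.Tendsto.congr' ?_ (hGcont.continuousAt.continuousWithinAt)
      filter_upwards [self_mem_nhdsWithin] with lam hlam
      exact (hGeq lam (by simpa using hlam)).symm
    rw [tendsto_nhds_unique ht1 ht2, hG0]
  -- STEP C: Lagrange interpolation
  have hL := lagrange_at_zero μ hμinj p hpdeg
  -- product identification
  have hprod : ∀ n : Fin N,
      (∏ k ∈ Finset.univ.erase n, (-(μ k)) / (μ n - μ k)) =
      (-1 : ℂ) ^ (N - 1) *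
        ∏ k ∈ Finset.univ.erase n, ((η k : ℂ) / ((η n : ℂ) - (η k : ℂ))) := by
    intro n
    have hterm : ∀ k ∈ Finset.univ.erase n,
        (-(μ k)) / (μ n - μ k) = -((η k : ℂ) / ((η n : ℂ) - (η k : ℂ))) := by
      intro k hk
      have hkn : k ≠ n := (Finset.mem_erase.mp hk).1
      have hne' : η n ≠ η k := fun h => hkn (hηinj h).symm
      have hηne : (η n : ℂ) - (η k : ℂ) ≠ 0 := by
        rw [sub_ne_zero]
        exact_mod_cast hne'
      have h2I : (2 * Complex.I : ℂ) ≠ 0 := mul_ne_zero two_ne_zero Complex.I_ne_zero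
      have hμne : μ n - μ k ≠ 0 := by
        simp only [hμdef]
        rw [show (2 : ℂ) * Complex.I * (η n : ℂ) - 2 * Complex.I * (η k : ℂ) =
          2 * Complex.I * ((η n : ℂ) - (η k : ℂ)) by ring]
        exact mul_ne_zero h2I hηne
      simp only [hμdef]
      field_simp
    rw [Finset.prod_congr rfl hterm]
    calc (∏ k ∈ Finset.univ.erase n, -((η k : ℂ) / ((η n : ℂ) - (η k : ℂ))))
        = ∏ k ∈ Finset.univ.erase n,
            (-1 : ℂ) * ((η k : ℂ) / ((η n : ℂ) - (η k : ℂ))) :=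
          Finset.prod_congr rfl fun k _ => by ring
      _ = (-1 : ℂ) ^ ((Finset.univ.erase n).card) *
            ∏ k ∈ Finset.univ.erase n, ((η k : ℂ) / ((η n : ℂ) - (η k : ℂ))) := by
          rw [Finset.prod_mul_distrib, Finset.prod_const]
      _ = _ := by
          rw [Finset.card_erase_of_mem (Finset.mem_univ n), Finset.card_univ,
            Fintype.card_fin]
  have hsign : (-1 : ℂ) ^ N * (-1 : ℂ) ^ (N - 1) = -1 := by
    obtain ⟨M, rfl⟩ := Nat.exists_eq_add_of_lt hN
    rw [show 0 + M + 1 - 1 = M by omega, show 0 + M + 1 = M + 1 by omega, pow_succ,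
      mul_comm ((-1:ℂ)^M) (-1), mul_assoc, ← mul_pow]
    norm_num
  -- assemble
  rw [hB, hL, Finset.mul_sum]
  refine Finset.sum_congr rfl fun n _ => ?_
  rw [hA n, hprod n, hcdef]
  simp only
  rw [pow_succ]
  set Pr := ∏ k ∈ Finset.univ.erase n, ((η k : ℂ) / ((η n : ℂ) - (η k : ℂ)))
  set e := (Real.exp (2 * η n * α n) : ℂ)
  linear_combination ((-1:ℂ)^(n:ℕ) * e * Pr * H x (μ n)) * hsign
end

section
/- Let η₁ > η₂ > 0. Define Q⁺₁ := −2iη₂, Q⁺₂ := 2iη₁, Q⁻₁ := 2iη₂, Q⁻₂ := −2iη₁ (so that Q⁻_m is the complex conjugate of Q⁺_m, and Q⁺₁, Q⁺₂ are respectively the unique solutions of (2iη₂)^{−1} + (2iη₂)^{−2}Q = 0 and (−2iη₁)^{−1} + (−2iη₁)^{−2}Q = 0). Define the 2×2 complex matrices G^± by G^±_{km} := −1/(12η_k) + (1/(6i))·(2iη_k)^{−2}·Q^±_m for k, m ∈ {1,2}. Then G⁻ is invertible and the bound state scattering matrix T := ((G⁻)^{−1}·G⁺)^T equals (1/(η₁²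 − η₂²))·[[(η₁−η₂)², 2η₂(η₁−η₂)], [2η₁(η₁−η₂), −(η₁−η₂)²]]. In particular T₂₂ < 0. -/
open Complex Matrix

private lemma zpow_neg_two_aux (x : ℂ) :
    (2 * Complex.I * x) ^ (-2 : ℤ) = (-(4 * x ^ 2))⁻¹ := by
  have h : (2 * Complex.I * x) ^ (2 : ℕ) = -(4 * x ^ 2) := by
    rw [mul_pow, mul_pow, Complex.I_sq]; ring
  rw [show (-2 : ℤ) = -(2 : ℕ) by norm_num, _root_.zpow_neg, zpow_natCast, h]

private lemma term_aux (y z : ℂ) (hy : y ≠ 0) :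
    1/(6*Complex.I)*(-(4*y^2))⁻¹*(2*Complex.I*z) = -z/(12*y^2) := by
  have h4 : ((4:ℂ)*y^2) ≠ 0 := mul_ne_zero (by norm_num) (pow_ne_zero 2 hy)
  rw [inv_neg]
  field_simp
  ring_nf

private lemma term_aux' (y z : ℂ) (hy : y ≠ 0) :
    1/(6*Complex.I)*(-(4*y^2))⁻¹*(-(2*Complex.I*z)) = z/(12*y^2) := by
  rw [mul_neg, term_aux y z hy]; ring

private lemma mul00_aux (a b : ℂ) (ha : a ≠ 0) (hab : a + b ≠ 0) :
    (-((a+b))/(12*a^2))*((a-b)/(a+b)) + 0*(2*b/(a+b)) = (b-a)/(12*a^2) := by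
  have h12 : (12:ℂ)*a^2 ≠ 0 := mul_ne_zero (by norm_num) (pow_ne_zero 2 ha)
  rw [zero_mul, add_zero, div_mul_div_comm,
    div_eq_div_iff (mul_ne_zero h12 hab) h12]
  ring

private lemma mul01_aux (a b : ℂ) (ha : a ≠ 0) (hab : a + b ≠ 0) :
    (-((a+b))/(12*a^2))*(2*a/(a+b)) + 0*(-((a-b)/(a+b))) = -1/(6*a) := by
  have h12 : (12:ℂ)*a^2 ≠ 0 := mul_ne_zero (by norm_num) (pow_ne_zero 2 ha)
  have h6 : (6:ℂ)*a ≠ 0 := mul_ne_zero (by norm_num) ha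
  rw [zero_mul, add_zero, div_mul_div_comm,
    div_eq_div_iff (mul_ne_zero h12 hab) h6]
  ring

private lemma mul10_aux (a b : ℂ) (hb : b ≠ 0) (hab : a + b ≠ 0) :
    (-1/(6*b))*((a-b)/(a+b)) + ((a-b)/(12*b^2))*(2*b/(a+b)) = 0 := by
  have h6 : (6:ℂ)*b ≠ 0 := mul_ne_zero (by norm_num) hb
  have h12 : (12:ℂ)*b^2 ≠ 0 := mul_ne_zero (by norm_num) (pow_ne_zero 2 hb)
  rw [div_mul_div_comm, div_mul_div_comm,
    div_add_div _ _ (mul_ne_zero h6 hab) (mul_ne_zero h12 hab),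
    div_eq_zero_iff]
  left; ring

private lemma mul11_aux (a b : ℂ) (hb : b ≠ 0) (hab : a + b ≠ 0) :
    (-1/(6*b))*(2*a/(a+b)) + ((a-b)/(12*b^2))*(-((a-b)/(a+b))) = -(a+b)/(12*b^2) := by
  have h6 : (6:ℂ)*b ≠ 0 := mul_ne_zero (by norm_num) hb
  have h12 : (12:ℂ)*b^2 ≠ 0 := mul_ne_zero (by norm_num) (pow_ne_zero 2 hb)
  rw [mul_neg, div_mul_div_comm, div_mul_div_comm, ← neg_div,
    div_add_div _ _ (mul_ne_zero h6 hab) (mul_ne_zero h12 hab),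
    div_eq_div_iff (mul_ne_zero (mul_ne_zero h6 hab) (mul_ne_zero h12 hab)) h12]
  ring

private lemma sc1_aux (a b : ℂ) (hab : a + b ≠ 0) (hsq : a^2 - b^2 ≠ 0) :
    1/(a^2-b^2) * (a-b)^2 = (a-b)/(a+b) := by
  rw [div_mul_eq_mul_div, one_mul, div_eq_div_iff hsq hab]; ring

private lemma sc2_aux (a b : ℂ) (hab : a + b ≠ 0) (hsq : a^2 - b^2 ≠ 0) :
    1/(a^2-b^2) * (2*a*(a-b)) = 2*a/(a+b) := by
  rw [div_mul_eq_mul_div, one_mul, div_eq_div_iff hsq hab]; ring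

private lemma sc2'_aux (a b : ℂ) (hab : a + b ≠ 0) (hsq : a^2 - b^2 ≠ 0) :
    1/(a^2-b^2) * (2*b*(a-b)) = 2*b/(a+b) := by
  rw [div_mul_eq_mul_div, one_mul, div_eq_div_iff hsq hab]; ring

private lemma sc3_aux (a b : ℂ) (hab : a + b ≠ 0) (hsq : a^2 - b^2 ≠ 0) :
    1/(a^2-b^2) * (-(a-b)^2) = -((a-b)/(a+b)) := by
  rw [div_mul_eq_mul_div, one_mul, ← neg_div, div_eq_div_iff hsq hab]; ring

/-- Explicit bound state scattering matrix for `N = 2`.  With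
`Q⁺ = (−2iη₂, 2iη₁)`, `Q⁻ = (2iη₂, −2iη₁)` and
`G^±_{km} = −1/(12η_k) + (1/(6i))(2iη_k)^{−2}Q^±_m`, the matrix `G⁻` is
invertible and `T = ((G⁻)⁻¹G⁺)ᵀ` equals
`(1/(η₁²−η₂²))·[[(η₁−η₂)², 2η₂(η₁−η₂)], [2η₁(η₁−η₂), −(η₁−η₂)²]]`;
in particular `T₂₂ < 0`. -/
theorem two_soliton_bound_state_scattering_matrix
    (η₁ η₂ : ℝ) (h₂ : 0 < η₂) (h₁₂ : η₂ < η₁)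
    (ηv : Fin 2 → ℝ) (hηv : ηv = ![η₁, η₂])
    (Qp Qm : Fin 2 → ℂ)
    (hQp : Qp = ![-(2 * Complex.I * (η₂ : ℂ)), 2 * Complex.I * (η₁ : ℂ)])
    (hQm : Qm = ![2 * Complex.I * (η₂ : ℂ), -(2 * Complex.I * (η₁ : ℂ))])
    (Gp Gm : Matrix (Fin 2) (Fin 2) ℂ)
    (hGp : ∀ k m : Fin 2, Gp k m =
      -1 / (12 * (ηv k : ℂ)) +
        (1 / (6 * Complex.I)) * (2 * Complex.I * (ηv k : ℂ)) ^ (-2 : ℤ) * Qp m)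
    (hGm : ∀ k m : Fin 2, Gm k m =
      -1 / (12 * (ηv k : ℂ)) +
        (1 / (6 * Complex.I)) * (2 * Complex.I * (ηv k : ℂ)) ^ (-2 : ℤ) * Qm m) :
    IsUnit Gm.det ∧
    (Gm⁻¹ * Gp)ᵀ = (1 / ((η₁ : ℂ) ^ 2 - (η₂ : ℂ) ^ 2)) •
      !![((η₁ : ℂ) - η₂) ^ 2, 2 * (η₂ : ℂ) * ((η₁ : ℂ) - η₂);
         2 * (η₁ : ℂ) * ((η₁ : ℂ) - η₂), -(((η₁ : ℂ) - η₂) ^ 2)] ∧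
    (((Gm⁻¹ * Gp)ᵀ) 1 1).re < 0 := by
  have h1 : (0:ℝ) < η₁ := h₂.trans h₁₂
  have he1 : (η₁ : ℂ) ≠ 0 := by exact_mod_cast h1.ne'
  have he2 : (η₂ : ℂ) ≠ 0 := by exact_mod_cast h₂.ne'
  have hsumR : (0:ℝ) < η₁ + η₂ := by linarith
  have hdiffR : (0:ℝ) < η₁ - η₂ := by linarith
  have hsum : (η₁ : ℂ) + η₂ ≠ 0 := by exact_mod_cast hsumR.ne'
  have hdiff : (η₁ : ℂ) - η₂ ≠ 0 := by
    have : ((η₁ - η₂ : ℝ) : ℂ) ≠ 0 := by exact_mod_cast hdiffR.ne'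
    push_cast at this; exact this
  have hsq : (η₁ : ℂ) ^ 2 - (η₂ : ℂ) ^ 2 ≠ 0 := by
    have : (η₁ : ℂ) ^ 2 - (η₂ : ℂ) ^ 2 = ((η₁:ℂ) - η₂) * ((η₁:ℂ) + η₂) := by ring
    rw [this]; exact mul_ne_zero hdiff hsum
  -- explicit entries
  have hGm00 := hGm 0 0; have hGm01 := hGm 0 1; have hGm10 := hGm 1 0; have hGm11 := hGm 1 1
  have hGp00 := hGp 0 0; have hGp01 := hGp 0 1; have hGp10 := hGp 1 0; have hGp11 := hGp 1 1
  simp only [hηv, hQp, hQm, Matrix.cons_val_zero, Matrix.cons_val_one, Matrix.head_cons,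
    zpow_neg_two_aux] at hGm00 hGm01 hGm10 hGm11 hGp00 hGp01 hGp10 hGp11
  have hGm00' : Gm 0 0 = -(((η₁:ℂ) + η₂)) / (12 * (η₁:ℂ)^2) := by
    rw [hGm00, term_aux _ _ he1]; field_simp; ring
  have hGm01' : Gm 0 1 = 0 := by
    rw [hGm01, term_aux' _ _ he1]; field_simp; ring
  have hGm10' : Gm 1 0 = -1 / (6 * (η₂:ℂ)) := by
    rw [hGm10, term_aux _ _ he2]; field_simp; ring
  have hGm11' : Gm 1 1 = ((η₁:ℂ) - η₂) / (12 * (η₂:ℂ)^2) := by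
    rw [hGm11, term_aux' _ _ he2]; field_simp; ring
  have hGp00' : Gp 0 0 = ((η₂:ℂ) - η₁) / (12 * (η₁:ℂ)^2) := by
    rw [hGp00, term_aux' _ _ he1]; field_simp; ring
  have hGp01' : Gp 0 1 = -1 / (6 * (η₁:ℂ)) := by
    rw [hGp01, term_aux _ _ he1]; field_simp; ring
  have hGp10' : Gp 1 0 = 0 := by
    rw [hGp10, term_aux' _ _ he2]; field_simp; ring
  have hGp11' : Gp 1 1 = -(((η₁:ℂ) + η₂)) / (12 * (η₂:ℂ)^2) := by
    rw [hGp11, term_aux _ _ he2]; field_simp; ring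
  -- determinant of Gm
  have hdet : Gm.det = -(((η₁:ℂ) + η₂) * ((η₁:ℂ) - η₂)) / (144 * (η₁:ℂ)^2 * (η₂:ℂ)^2) := by
    rw [Matrix.det_fin_two, hGm00', hGm01', hGm10', hGm11']
    field_simp
    ring
  have hdet_ne : Gm.det ≠ 0 := by
    rw [hdet]
    apply div_ne_zero
    · simpa using mul_ne_zero hsum hdiff
    · exact mul_ne_zero (mul_ne_zero (by norm_num) (pow_ne_zero 2 he1)) (pow_ne_zero 2 he2)
  have hU : IsUnit Gm.det := isUnit_iff_ne_zero.mpr hdet_ne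
  have hInv : Invertible Gm := Gm.invertibleOfIsUnitDet hU
  -- the claimed matrix
  set R : Matrix (Fin 2) (Fin 2) ℂ :=
    (1 / ((η₁ : ℂ) ^ 2 - (η₂ : ℂ) ^ 2)) •
      !![((η₁ : ℂ) - η₂) ^ 2, 2 * (η₂ : ℂ) * ((η₁ : ℂ) - η₂);
         2 * (η₁ : ℂ) * ((η₁ : ℂ) - η₂), -(((η₁ : ℂ) - η₂) ^ 2)] with hR
  have hGmM : Gm = !![-(((η₁:ℂ) + η₂)) / (12 * (η₁:ℂ)^2), 0;
      -1 / (6 * (η₂:ℂ)), ((η₁:ℂ) - η₂) / (12 * (η₂:ℂ)^2)] := by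
    ext i j
    fin_cases i <;> fin_cases j
    · simpa using hGm00'
    · simpa using hGm01'
    · simpa using hGm10'
    · simpa using hGm11'
  have hGpM : Gp = !![((η₂:ℂ) - η₁) / (12 * (η₁:ℂ)^2), -1 / (6 * (η₁:ℂ));
      0, -(((η₁:ℂ) + η₂)) / (12 * (η₂:ℂ)^2)] := by
    ext i j
    fin_cases i <;> fin_cases j
    · simpa using hGp00'
    · simpa using hGp01'
    · simpa using hGp10'
    · simpa using hGp11'
  have hRT : Rᵀ = !![((η₁:ℂ) - η₂)/((η₁:ℂ) + η₂), 2*(η₁:ℂ)/((η₁:ℂ) + η₂);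
      2*(η₂:ℂ)/((η₁:ℂ) + η₂), -(((η₁:ℂ) - η₂)/((η₁:ℂ) + η₂))] := by
    rw [hR]
    ext i j
    fin_cases i <;> fin_cases j
    · simpa using sc1_aux _ _ hsum hsq
    · simpa using sc2_aux _ _ hsum hsq
    · simpa using sc2'_aux _ _ hsum hsq
    · simpa using sc3_aux _ _ hsum hsq
  have hkey : Gm * Rᵀ = Gp := by
    rw [hGmM, hGpM, hRT]
    ext i j
    rw [Matrix.mul_apply, Fin.sum_univ_two]
    fin_cases i <;> fin_cases j
    · simpa using mul00_aux _ _ he1 hsum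
    · simpa using mul01_aux _ _ he1 hsum
    · simpa using mul10_aux _ _ he2 hsum
    · simpa using mul11_aux _ _ he2 hsum
  have hT : (Gm⁻¹ * Gp)ᵀ = R := by
    rw [← hkey, Matrix.inv_mul_cancel_left_of_invertible, Matrix.transpose_transpose]
  refine ⟨hU, hT, ?_⟩
  rw [hT]
  have hval : R 1 1 = ((-((η₁ - η₂)/(η₁ + η₂)) : ℝ) : ℂ) := by
    rw [show R 1 1 = Rᵀ 1 1 from rfl, hRT]
    push_cast
    simp
  rw [hval, Complex.ofReal_re]
  exact neg_lt_zero.mpr (div_pos hdiffR hsumR)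
end
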